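/- arXiv:2111.04030 — 5 statements merged into one kernel-verified Lean document; each statement's English description precedes it below -/
import Mathlib

section
/- For any finite binary string x of length n and block lengths l, k with kl dividing n, the disjoint block entropy satisfies H^d_{kl}(x) ≤ H^d_l(x), i.e., (kl)·H^d_{kl}(x) ≤ k·(l·H^d_l(x)). -/
open MeasureTheory Filter Topology Real
open scoped ENNReal

noncomputable section

abbrev Cantor := ℕ → Bool

/-- `j`-fold left shift of a binary sequence. -/
def shiftk (x : Cantor) (j : ℕ) : Cantor := fun i => x (i + j)

/-- the left shift `T`. -/
def Tshift (x : Cantor) : Cantor := fun i => x (i + 1)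

/-- binary evaluation map `v`. -/
noncomputable def eval (x : Cantor) : ℝ := ∑' i : ℕ, if x i then ((2:ℝ) ^ (i + 1))⁻¹ else 0

noncomputable def negMulLog2 (p : ℝ) : ℝ := - p * Real.logb 2 p

/-- sliding count probability of a word `w` of length `l` in the prefix `x_0^{n-1}`. -/
noncomputable def slidingP (x : Cantor) (n l : ℕ) (w : Fin l → Bool) : ℝ :=
  (((Finset.range (n - l + 1)).filter (fun i => ∀ j : Fin l, x (i + (j : ℕ)) = w j)).card : ℝ)
    / ((n - l + 1 : ℕ) : ℝ)

/-- sliding block entropy `H_l(x_0^{n-1})`. -/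
noncomputable def slidingH (x : Cantor) (n l : ℕ) : ℝ :=
  (1 / (l : ℝ)) * ∑ w : Fin l → Bool, negMulLog2 (slidingP x n l w)

/-- disjoint block probability `P^d`. -/
noncomputable def disjP (x : Cantor) (n l : ℕ) (w : Fin l → Bool) : ℝ :=
  (((Finset.range (n / l)).filter (fun i => ∀ j : Fin l, x (l * i + (j : ℕ)) = w j)).card : ℝ)
    / ((n / l : ℕ) : ℝ)

/-- disjoint block entropy `H^d_l(x_0^{n-1})`. -/
noncomputable def disjH (x : Cantor) (n l : ℕ) : ℝ :=
  (1 / (l : ℝ)) * ∑ w : Fin l → Bool, negMulLog2 (disjP x n l w)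

/-- finite-state dimension via sliding block entropies. -/
noncomputable def dimFS (x : Cantor) : ℝ :=
  ⨅ l : ℕ, Filter.liminf (fun n => slidingH x n (l + 1)) Filter.atTop

/-- finite-state strong dimension. -/
noncomputable def DimFS (x : Cantor) : ℝ :=
  ⨅ l : ℕ, Filter.limsup (fun n => slidingH x n (l + 1)) Filter.atTop

/-- cylinder set. -/
def Cyl (l : ℕ) (w : Fin l → Bool) : Set Cantor := {y | ∀ j : Fin l, y (j : ℕ) = w j}

/-- empirical measures `ν_n = n⁻¹ ∑_{j<n} δ_{T^j x}` on Cantor space. -/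
noncomputable def empMeas (x : Cantor) (n : ℕ) : Measure Cantor :=
  (n : ℝ≥0∞)⁻¹ • ∑ j ∈ Finset.range n, Measure.dirac (shiftk x j)

/-- weak convergence of a sequence of measures. -/
def WeakConv {α : Type*} [TopologicalSpace α] [MeasurableSpace α]
    (ν : ℕ → Measure α) (μ : Measure α) : Prop :=
  ∀ f : BoundedContinuousFunction α ℂ,
    Tendsto (fun n => ∫ y, f y ∂(ν n)) atTop (nhds (∫ y, f y ∂μ))

/-- block entropy `H_n(μ)` of a measure on Cantor space. -/
noncomputable def measH (μ : Measure Cantor) (n : ℕ) : ℝ :=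
  ∑ w : Fin n → Bool, negMulLog2 ((μ (Cyl n w)).toReal)

/-- lower average entropy. -/
noncomputable def Hminus (μ : Measure Cantor) : ℝ :=
  Filter.liminf (fun n => measH μ n / n) Filter.atTop

/-- upper average entropy. -/
noncomputable def Hplus (μ : Measure Cantor) : ℝ :=
  Filter.limsup (fun n => measH μ n / n) Filter.atTop

/-- set of subsequence weak limits of the empirical measures of `x`. -/
def Wx (x : Cantor) : Set (Measure Cantor) :=
  {μ | IsProbabilityMeasure μ ∧
      ∃ φ : ℕ → ℕ, StrictMono φ ∧ (∀ m, 0 < φ m) ∧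
        WeakConv (fun m => empMeas x (φ m)) μ}

/-- normality of a binary sequence. -/
def IsNormal (x : Cantor) : Prop :=
  ∀ (l : ℕ) (w : Fin l → Bool),
    Tendsto (fun n => slidingP x n l w) atTop (nhds (((2:ℝ) ^ l)⁻¹))

/-- Weyl averages `(1/n) ∑_{j<n} e^{2πik v(T^j x)}`. -/
noncomputable def weylAvg (x : Cantor) (k : ℤ) (n : ℕ) : ℂ :=
  (n : ℂ)⁻¹ * ∑ j ∈ Finset.range n,
    Complex.exp (2 * (Real.pi : ℂ) * Complex.I * (k : ℂ) * ((eval (shiftk x j) : ℝ) : ℂ))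

/-- Weyl averages on the torus, `(1/n) ∑_{j<n} e^{2πik 2^j r}`. -/
noncomputable def weylAvgT (r : ℝ) (k : ℤ) (n : ℕ) : ℂ :=
  (n : ℂ)⁻¹ * ∑ j ∈ Finset.range n,
    Complex.exp (2 * (Real.pi : ℂ) * Complex.I * (k : ℂ) * (((2:ℝ) ^ j * r : ℝ) : ℂ))

/-- empirical measures `(1/n) ∑_{j<n} δ_{2^j r mod 1}` on the torus. -/
noncomputable def empMeasT (r : ℝ) (n : ℕ) : Measure UnitAddCircle :=
  (n : ℝ≥0∞)⁻¹ • ∑ j ∈ Finset.range n, Measure.dirac (((2:ℝ) ^ j * r : ℝ) : UnitAddCircle)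

/-- dyadic interval `[j/2^k, (j+1)/2^k)` on the torus. -/
def dyadicI (k j : ℕ) : Set UnitAddCircle :=
  (fun t : ℝ => (t : UnitAddCircle)) '' Set.Ico ((j : ℝ) / 2 ^ k) (((j : ℝ) + 1) / 2 ^ k)

/-- a real number is a dyadic rational. -/
def IsDyadic (t : ℝ) : Prop := ∃ (a : ℤ) (n : ℕ), t = (a : ℝ) / 2 ^ n

/-- value of a finite binary word. -/
noncomputable def val2 (l : ℕ) (w : Fin l → Bool) : ℝ :=
  ∑ j : Fin l, if w j then ((2:ℝ) ^ ((j : ℕ) + 1))⁻¹ else 0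

/-- dyadic interval `I_w` on the torus. -/
def IwT (l : ℕ) (w : Fin l → Bool) : Set UnitAddCircle :=
  (fun t : ℝ => (t : UnitAddCircle)) '' Set.Ico (val2 l w) (val2 l w + ((2:ℝ) ^ l)⁻¹)

/-- value of a finite base-`m` word. -/
noncomputable def valm (m n : ℕ) (w : Fin n → Fin m) : ℝ :=
  ∑ j : Fin n, ((w j : ℕ) : ℝ) / (m : ℝ) ^ ((j : ℕ) + 1)

/-- base-`m` interval `I^m_w` on the torus. -/
def ImT (m n : ℕ) (w : Fin n → Fin m) : Set UnitAddCircle :=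
  (fun t : ℝ => (t : UnitAddCircle)) '' Set.Ico (valm m n w) (valm m n w + ((m : ℝ) ^ n)⁻¹)

/-- base-`m` partition entropy `H^m_n(μ)` (natural logarithm). -/
noncomputable def measHT (μ : Measure UnitAddCircle) (m n : ℕ) : ℝ :=
  ∑ w : Fin n → Fin m, Real.negMulLog ((μ (ImT m n w)).toReal)

/-- lower Rényi dimension w.r.t. partition factor `m`. -/
noncomputable def renyiLower (μ : Measure UnitAddCircle) (m : ℕ) : ℝ :=
  Filter.liminf (fun n => measHT μ m n / (n * Real.log m)) Filter.atTop

/-- upper Rényi dimension w.r.t. partition factor `m`. -/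
noncomputable def renyiUpper (μ : Measure UnitAddCircle) (m : ℕ) : ℝ :=
  Filter.limsup (fun n => measHT μ m n / (n * Real.log m)) Filter.atTop

lemma sum_range_mul_eq {M : Type*} [AddCommMonoid M] (f : ℕ → M) (k m : ℕ) :
    ∑ i ∈ Finset.range (k * m), f i
      = ∑ i ∈ Finset.range m, ∑ t ∈ Finset.range k, f (k * i + t) := by
  induction m with
  | zero => simp
  | succ m ih =>
      rw [Nat.mul_succ, Finset.sum_range_add, ih, Finset.sum_range_succ]

lemma gibbs {ι : Type*} [Fintype ι] (p q : ι → ℝ)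
    (hp : ∀ i, 0 ≤ p i) (hq : ∀ i, 0 ≤ q i)
    (hpq : ∀ i, p i ≠ 0 → q i ≠ 0)
    (hp1 : ∑ i, p i = 1) (hq1 : ∑ i, q i ≤ 1) :
    ∑ i, negMulLog2 (p i) ≤ ∑ i, - p i * Real.logb 2 (q i) := by
  have key : ∀ i, p i * (Real.log (q i) - Real.log (p i)) ≤ q i - p i := by
    intro i
    rcases eq_or_lt_of_le (hp i) with h | h
    · simp [← h, hq i]
    · have hqi : 0 < q i := lt_of_le_of_ne (hq i) (Ne.symm (hpq i h.ne'))
      have hlog := Real.log_le_sub_one_of_pos (div_pos hqi h)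
      rw [Real.log_div hqi.ne' h.ne'] at hlog
      have := mul_le_mul_of_nonneg_left hlog (le_of_lt h)
      calc p i * (Real.log (q i) - Real.log (p i)) ≤ p i * (q i / p i - 1) := this
        _ = q i - p i := by field_simp
  have hsum : ∑ i, p i * (Real.log (q i) - Real.log (p i)) ≤ 0 := by
    calc ∑ i, p i * (Real.log (q i) - Real.log (p i)) ≤ ∑ i, (q i - p i) :=
          Finset.sum_le_sum fun i _ => key i
      _ = (∑ i, q i) - (∑ i, p i) := Finset.sum_sub_distrib _ _
      _ ≤ 0 := by rw [hp1]; linarith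
  rw [← sub_nonneg, ← Finset.sum_sub_distrib]
  have heq : ∀ i, - p i * Real.logb 2 (q i) - negMulLog2 (p i)
      = (- (p i * (Real.log (q i) - Real.log (p i)))) / Real.log 2 := by
    intro i; simp only [negMulLog2, Real.logb]; ring
  rw [Finset.sum_congr rfl fun i _ => heq i, ← Finset.sum_div, Finset.sum_neg_distrib]
  apply div_nonneg _ (Real.log_nonneg one_le_two)
  linarith

lemma sum_comp_eq {β : Type*} [Fintype β] [DecidableEq β] (g : ℕ → β) (m : ℕ) (c : β → ℝ) :
    ∑ i ∈ Finset.range m, c (g i)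
      = ∑ b : β, (((Finset.range m).filter (fun i => g i = b)).card : ℝ) * c b := by
  classical
  simp only [Finset.card_filter]
  push_cast
  simp only [Finset.sum_mul]
  rw [Finset.sum_comm]
  refine Finset.sum_congr rfl fun i _ => ?_
  simp [Finset.sum_ite_eq', ite_mul]

lemma sum_card_eq {β : Type*} [Fintype β] [DecidableEq β] (g : ℕ → β) (m : ℕ) :
    ∑ b : β, (((Finset.range m).filter (fun i => g i = b)).card : ℝ) = m := by
  have := sum_comp_eq g m (fun _ => (1:ℝ))
  simpa using this.symm

def subw (k l : ℕ) (t : Fin k) (w : Fin (k * l) → Bool) (j : Fin l) : Bool :=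
  w ⟨l * t + j, by
    calc l * (t:ℕ) + (j:ℕ) < l * t + l := Nat.add_lt_add_left j.isLt _
      _ = l * (t + 1) := by ring
      _ ≤ l * k := Nat.mul_le_mul_left _ t.isLt
      _ = k * l := Nat.mul_comm _ _⟩

def blockEquiv (k l : ℕ) (hl : 0 < l) : (Fin (k * l) → Bool) ≃ (Fin k → Fin l → Bool) where
  toFun w t := subw k l t w
  invFun f j := f ⟨(j : ℕ) / l, by
      exact Nat.div_lt_of_lt_mul (lt_of_lt_of_eq j.isLt (Nat.mul_comm k l))⟩
    ⟨(j : ℕ) % l, Nat.mod_lt _ hl⟩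
  left_inv w := by
    funext j
    exact congrArg w (Fin.ext (Nat.div_add_mod (j : ℕ) l))
  right_inv f := by
    funext t j
    have hA : ((l * (t : ℕ) + (j : ℕ)) / l) = (t : ℕ) := by
      rw [Nat.mul_add_div hl, Nat.div_eq_of_lt j.isLt, Nat.add_zero]
    have hB : ((l * (t : ℕ) + (j : ℕ)) % l) = (j : ℕ) := by
      rw [Nat.mul_add_mod, Nat.mod_eq_of_lt j.isLt]
    simp [subw, hA, hB]

/-- (kl)·H^d_{kl}(x_0^{n-1}) ≤ k·(l·H^d_l(x_0^{n-1})) when kl ∣ n. -/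
theorem disjoint_block_entropy_subadditive
    (x : Cantor) (n l k : ℕ) (hl : 0 < l) (hk : 0 < k) (hdvd : k * l ∣ n) :
    ((k * l : ℕ) : ℝ) * disjH x n (k * l) ≤ (k : ℝ) * ((l : ℝ) * disjH x n l) := by
  classical
  obtain ⟨m, rfl⟩ := hdvd
  rcases Nat.eq_zero_or_pos m with rfl | hm
  · simp [disjH, disjP, negMulLog2]
  have hkl : 0 < k * l := Nat.mul_pos hk hl
  have hNkl : k * l * m / (k * l) = m := Nat.mul_div_cancel_left m hkl
  have hNl : k * l * m / l = k * m := by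
    rw [show k * l * m = l * (k * m) by ring, Nat.mul_div_cancel_left _ hl]
  have hkm : 0 < k * m := Nat.mul_pos hk hm
  set P : (Fin (k * l) → Bool) → ℝ := disjP x (k * l * m) (k * l) with hP
  set R : (Fin l → Bool) → ℝ := disjP x (k * l * m) l with hR
  set gL : ℕ → (Fin (k * l) → Bool) := fun i j => x ((k * l) * i + (j : ℕ)) with hgL
  set gl : ℕ → (Fin l → Bool) := fun i j => x (l * i + (j : ℕ)) with hgl
  have hPw : ∀ w, P w = (((Finset.range m).filter (fun i => gL i = w)).card : ℝ) / m := by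
    intro w
    rw [hP]; unfold disjP; rw [hNkl]
    have hfil : (Finset.range m).filter (fun i => ∀ j : Fin (k * l), x ((k * l) * i + (j : ℕ)) = w j)
        = (Finset.range m).filter (fun i => gL i = w) :=
      Finset.filter_congr fun i _ => by simp [hgL, funext_iff]
    rw [hfil]
  have hRv : ∀ v, R v
      = (((Finset.range (k * m)).filter (fun i => gl i = v)).card : ℝ) / ((k * m : ℕ) : ℝ) := by
    intro v
    rw [hR]; unfold disjP; rw [hNl]
    have hfil : (Finset.range (k * m)).filter (fun i => ∀ j : Fin l, x (l * i + (j : ℕ)) = v j)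
        = (Finset.range (k * m)).filter (fun i => gl i = v) :=
      Finset.filter_congr fun i _ => by simp [hgl, funext_iff]
    rw [hfil]
  have hP0 : ∀ w, 0 ≤ P w := fun w => by rw [hPw]; positivity
  have hR0 : ∀ v, 0 ≤ R v := fun v => by rw [hRv]; positivity
  have hPsum : ∑ w, P w = 1 := by
    simp only [hPw]
    rw [← Finset.sum_div, sum_card_eq gL m, div_self (by positivity)]
  have hRsum : ∑ v, R v = 1 := by
    simp only [hRv]
    rw [← Finset.sum_div, sum_card_eq gl (k * m), div_self (by positivity)]
  set Q : (Fin (k * l) → Bool) → ℝ := fun w => ∏ t : Fin k, R (subw k l t w) with hQ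
  have hQ0 : ∀ w, 0 ≤ Q w := fun w => Finset.prod_nonneg fun t _ => hR0 _
  have hQsum : ∑ w, Q w = 1 := by
    have h1 : ∑ w, Q w = ∑ f : Fin k → Fin l → Bool, ∏ t, R (f t) :=
      Equiv.sum_comp (blockEquiv k l hl) (fun f => ∏ t, R (f t))
    rw [h1, ← Fintype.piFinset_univ, ← Finset.prod_univ_sum (fun _ => Finset.univ) fun _ v => R v]
    simp [hRsum]
  have hsub : ∀ (t : Fin k) (i : ℕ), subw k l t (gL i) = gl (k * i + t) := by
    intro t i
    funext j
    simp only [subw, hgL, hgl]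
    congr 1
    ring
  have hpq : ∀ w, P w ≠ 0 → Q w ≠ 0 := by
    intro w hw
    have hcard : ((Finset.range m).filter (fun i => gL i = w)).card ≠ 0 := by
      intro h; exact hw (by rw [hPw, h]; simp)
    obtain ⟨i, hi⟩ := Finset.card_ne_zero.mp hcard
    rw [Finset.mem_filter, Finset.mem_range] at hi
    rw [hQ]
    apply Finset.prod_ne_zero_iff.mpr
    intro t _
    have hmem : k * i + (t : ℕ) ∈ (Finset.range (k * m)).filter (fun i' => gl i' = subw k l t w) := by
      refine Finset.mem_filter.mpr ⟨Finset.mem_range.mpr ?_, ?_⟩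
      · calc k * i + (t : ℕ) < k * i + k := Nat.add_lt_add_left t.isLt _
          _ = k * (i + 1) := by ring
          _ ≤ k * m := Nat.mul_le_mul_left _ hi.1
      · rw [← hi.2, hsub t i]
    have : ((Finset.range (k * m)).filter (fun i' => gl i' = subw k l t w)).card ≠ 0 :=
      Finset.card_ne_zero.mpr ⟨_, hmem⟩
    rw [hRv]
    exact div_ne_zero (Nat.cast_ne_zero.mpr this) (by positivity)
  have hG := gibbs P Q hP0 hQ0 hpq hPsum (le_of_eq hQsum)
  set c : (Fin l → Bool) → ℝ := fun v => - Real.logb 2 (R v) with hc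
  have hA : ∀ w, - P w * Real.logb 2 (Q w) = ∑ t : Fin k, P w * c (subw k l t w) := by
    intro w
    rcases eq_or_ne (P w) 0 with h | h
    · simp [h]
    · have hQw := hpq w h
      have hfac : ∀ t ∈ (Finset.univ : Finset (Fin k)), R (subw k l t w) ≠ 0 :=
        fun t ht => Finset.prod_ne_zero_iff.mp hQw t ht
      rw [hQ]
      simp only [Real.logb, hc]
      rw [Real.log_prod hfac, Finset.sum_div, Finset.mul_sum]
      exact Finset.sum_congr rfl fun t _ => by ring
  have hC : ∀ t : Fin k, ∑ w, P w * c (subw k l t w)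
      = (1 / (m : ℝ)) * ∑ i ∈ Finset.range m, c (gl (k * i + t)) := by
    intro t
    have := sum_comp_eq gL m (fun w => c (subw k l t w))
    rw [Finset.sum_congr rfl (fun i _ => congrArg c (hsub t i))] at this
    rw [this, Finset.mul_sum]
    exact Finset.sum_congr rfl fun w _ => by rw [hPw w]; ring
  have hF : ∑ i ∈ Finset.range (k * m), c (gl i) = ((k * m : ℕ) : ℝ) * ∑ v, R v * c v := by
    rw [sum_comp_eq gl (k * m) c, Finset.mul_sum]
    refine Finset.sum_congr rfl fun v _ => ?_
    rw [hRv v]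
    field_simp
  have hmain : ∑ w, - P w * Real.logb 2 (Q w) = (k : ℝ) * ∑ v, negMulLog2 (R v) := by
    calc ∑ w, - P w * Real.logb 2 (Q w)
        = ∑ w, ∑ t : Fin k, P w * c (subw k l t w) := Finset.sum_congr rfl fun w _ => hA w
      _ = ∑ t : Fin k, ∑ w, P w * c (subw k l t w) := Finset.sum_comm
      _ = ∑ t : Fin k, (1 / (m : ℝ)) * ∑ i ∈ Finset.range m, c (gl (k * i + t)) :=
          Finset.sum_congr rfl fun t _ => hC t
      _ = (1 / (m : ℝ)) * ∑ t : Fin k, ∑ i ∈ Finset.range m, c (gl (k * i + t)) := by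
          rw [Finset.mul_sum]
      _ = (1 / (m : ℝ)) * ∑ i ∈ Finset.range (k * m), c (gl i) := by
          congr 1
          rw [sum_range_mul_eq (fun i => c (gl i)) k m]
          rw [Fin.sum_univ_eq_sum_range (fun t => ∑ i ∈ Finset.range m, c (gl (k * i + t))) k]
          exact Finset.sum_comm
      _ = (1 / (m : ℝ)) * (((k * m : ℕ) : ℝ) * ∑ v, R v * c v) := by rw [hF]
      _ = (k : ℝ) * ∑ v, negMulLog2 (R v) := by
          push_cast
          rw [Finset.mul_sum, Finset.mul_sum, Finset.mul_sum]
          refine Finset.sum_congr rfl fun v _ => ?_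
          simp only [negMulLog2, hc]
          have hm0 : (m : ℝ) ≠ 0 := Nat.cast_ne_zero.mpr hm.ne'
          field_simp
  have hfinal : ∑ w, negMulLog2 (P w) ≤ (k : ℝ) * ∑ v, negMulLog2 (R v) := by
    rw [← hmain]; exact hG
  unfold disjH
  rw [← hP, ← hR]
  have h1 : ((k * l : ℕ) : ℝ) ≠ 0 := Nat.cast_ne_zero.mpr hkl.ne'
  have h2 : (l : ℝ) ≠ 0 := Nat.cast_ne_zero.mpr hl.ne'
  push_cast
  push_cast at h1
  rw [show (k : ℝ) * (l : ℝ) * (1 / ((k : ℝ) * (l : ℝ)) * ∑ w, negMulLog2 (P w))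
      = ∑ w, negMulLog2 (P w) by field_simp]
  rw [show (k : ℝ) * ((l : ℝ) * (1 / (l : ℝ) * ∑ v, negMulLog2 (R v)))
      = (k : ℝ) * ∑ v, negMulLog2 (R v) by field_simp]
  exact hfinal

end
end

section
/- For any x ∈ {0,1}^∞ and positive integers l, m, the sliding block entropies satisfy (l+m)·H_{l+m}(x_0^{n-1}) ≤ l·H_l(x_0^{n-1}) + m·H_m(x_0^{n-1}) + o(n)/n, where the error term tends to 0 as n → ∞ at a rate depending only on l and m. -/
open MeasureTheory Filter Topology Real
open scoped ENNReal

noncomputable section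

namespace SlidingAux

/-! ### Analytic lemmas about `negMulLog` -/

lemma eta_subadd {p d : ℝ} (hp : 0 ≤ p) (hd : 0 ≤ d) :
    negMulLog (p + d) ≤ negMulLog p + negMulLog d := by
  rcases eq_or_lt_of_le hp with h | hp'
  · simp [← h]
  rcases eq_or_lt_of_le hd with h | hd'
  · simp [← h]
  have h1 : log p ≤ log (p + d) := Real.log_le_log hp' (by linarith)
  have h2 : log d ≤ log (p + d) := Real.log_le_log hd' (by linarith)
  simp only [negMulLog]
  nlinarith [mul_le_mul_of_nonneg_left h1 hp, mul_le_mul_of_nonneg_left h2 hd]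

lemma eta_drop {p d : ℝ} (hp : 0 ≤ p) (hd : 0 ≤ d) (h1 : p + d ≤ 1) :
    negMulLog p ≤ negMulLog (p + d) + d := by
  rcases eq_or_lt_of_le hp with h | hp'
  · simp only [← h, negMulLog_zero, zero_add]
    have := negMulLog_nonneg hd (by linarith)
    linarith
  have hpd : 0 < p + d := by linarith
  have hl1 : log ((p+d)/p) ≤ (p+d)/p - 1 := log_le_sub_one_of_pos (by positivity)
  have hl2 : log ((p+d)/p) = log (p+d) - log p := log_div (by positivity) (by positivity)
  have hl3 : log (p + d) ≤ 0 := log_nonpos (by linarith) h1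
  simp only [negMulLog]
  have key : p * (log (p+d) - log p) ≤ d := by
    have h4 := mul_le_mul_of_nonneg_left hl1 hp
    rw [hl2] at h4
    have h5 : p * ((p+d)/p - 1) = d := by field_simp; ring
    linarith
  nlinarith [mul_nonpos_of_nonneg_of_nonpos hd hl3]

lemma mod_mono {d δ : ℝ} (hd : 0 ≤ d) (hdδ : d ≤ δ) (hδ : δ ≤ 1) :
    negMulLog d + d ≤ negMulLog δ + δ := by
  rcases eq_or_lt_of_le hd with h | hd'
  · simp only [← h, negMulLog_zero, add_zero]
    have := negMulLog_nonneg (hd.trans hdδ) hδ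
    linarith
  have hδ' : 0 < δ := lt_of_lt_of_le hd' hdδ
  have hlogδ : log δ ≤ 0 := log_nonpos hδ'.le hδ
  have h1 : log (δ/d) ≤ δ/d - 1 := log_le_sub_one_of_pos (by positivity)
  have h2 : log (δ/d) = log δ - log d := log_div (by positivity) (by positivity)
  simp only [negMulLog]
  have key : d * (log δ - log d) ≤ δ - d := by
    calc d * (log δ - log d) = d * log (δ/d) := by rw [h2]
    _ ≤ d * (δ/d - 1) := mul_le_mul_of_nonneg_left h1 hd
    _ = δ - d := by field_simp
  nlinarith [mul_nonneg (show (0:ℝ) ≤ δ - d by linarith) (show (0:ℝ) ≤ -log δ by linarith)]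

lemma eta_close_aux {q d δ : ℝ} (hq : 0 ≤ q) (hd : 0 ≤ d) (h1 : q + d ≤ 1)
    (hdδ : d ≤ δ) (hδ : δ ≤ 1) :
    |negMulLog (q + d) - negMulLog q| ≤ negMulLog δ + δ := by
  have hdd : negMulLog d + d ≤ negMulLog δ + δ := mod_mono hd hdδ hδ
  have h2 := eta_subadd hq hd
  have h3 := eta_drop hq hd h1
  have h4 : 0 ≤ negMulLog d := negMulLog_nonneg hd (by linarith)
  rw [abs_sub_le_iff]
  constructor <;> linarith

lemma eta_close {p q δ : ℝ} (hp0 : 0 ≤ p) (hq0 : 0 ≤ q) (hp1 : p ≤ 1) (hq1 : q ≤ 1)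
    (hpq : |p - q| ≤ δ) (hδ : δ ≤ 1) :
    |negMulLog p - negMulLog q| ≤ negMulLog δ + δ := by
  rcases le_total q p with h | h
  · have := eta_close_aux hq0 (by linarith : (0:ℝ) ≤ p - q) (by linarith)
      (by rw [abs_of_nonneg (by linarith : (0:ℝ) ≤ p - q)] at hpq; linarith) hδ
    simpa using this
  · have := eta_close_aux hp0 (by linarith : (0:ℝ) ≤ q - p) (by linarith)
      (by rw [abs_sub_comm, abs_of_nonneg (by linarith : (0:ℝ) ≤ q - p)] at hpq; linarith) hδ
    rw [abs_sub_comm]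
    simpa using this

lemma entropy_subadd {α β : Type*} [Fintype α] [Fintype β]
    (Q : α → β → ℝ) (hQ : ∀ a b, 0 ≤ Q a b) (hsum : ∑ a, ∑ b, Q a b = 1) :
    ∑ a, ∑ b, negMulLog (Q a b) ≤
      (∑ a, negMulLog (∑ b, Q a b)) + ∑ b, negMulLog (∑ a, Q a b) := by
  set A : α → ℝ := fun a => ∑ b, Q a b with hA
  set B : β → ℝ := fun b => ∑ a, Q a b with hB
  have hA0 : ∀ a, 0 ≤ A a := fun a => Finset.sum_nonneg fun b _ => hQ a b
  have hB0 : ∀ b, 0 ≤ B b := fun b => Finset.sum_nonneg fun a _ => hQ a b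
  have hAsum : ∑ a, A a = 1 := hsum
  have hBsum : ∑ b, B b = 1 := by rw [hB]; rw [Finset.sum_comm]; exact hsum
  have key : ∀ a b, negMulLog (Q a b) ≤
      Q a b * (-(log (A a)) - log (B b)) + (A a * B b - Q a b) := by
    intro a b
    rcases eq_or_lt_of_le (hQ a b) with h | h
    · rw [← h, negMulLog_zero]
      nlinarith [mul_nonneg (hA0 a) (hB0 b)]
    · have hAa : 0 < A a := lt_of_lt_of_le h (Finset.single_le_sum (fun b _ => hQ a b) (Finset.mem_univ b))
      have hBb : 0 < B b := lt_of_lt_of_le h (Finset.single_le_sum (fun a _ => hQ a b) (Finset.mem_univ a))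
      have hlog : log (A a * B b / Q a b) ≤ A a * B b / Q a b - 1 :=
        log_le_sub_one_of_pos (by positivity)
      have heq : log (A a * B b / Q a b) = log (A a) + log (B b) - log (Q a b) := by
        rw [log_div (by positivity) (by positivity), log_mul (by positivity) (by positivity)]
      rw [heq] at hlog
      have h2 := mul_le_mul_of_nonneg_left hlog (le_of_lt h)
      have heq2 : Q a b * (A a * B b / Q a b - 1) = A a * B b - Q a b := by field_simp
      rw [heq2] at h2
      simp only [negMulLog]
      nlinarith
  have T1 : ∑ a, ∑ b, Q a b * (-(log (A a))) = ∑ a, negMulLog (A a) := by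
    refine Finset.sum_congr rfl fun a _ => ?_
    rw [← Finset.sum_mul]
    show A a * (-(log (A a))) = negMulLog (A a)
    simp [negMulLog]
  have T2 : ∑ a, ∑ b, Q a b * (-(log (B b))) = ∑ b, negMulLog (B b) := by
    rw [Finset.sum_comm]
    refine Finset.sum_congr rfl fun b _ => ?_
    rw [← Finset.sum_mul]
    show B b * (-(log (B b))) = negMulLog (B b)
    simp [negMulLog]
  have T3 : ∑ a, ∑ b, A a * B b = 1 := by
    rw [← Finset.sum_mul_sum, hAsum, hBsum, one_mul]
  have expand : ∀ a b, Q a b * (-(log (A a)) - log (B b)) + (A a * B b - Q a b)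
      = Q a b * (-(log (A a))) + (Q a b * (-(log (B b))) + (A a * B b - Q a b)) :=
    fun a b => by ring
  calc ∑ a, ∑ b, negMulLog (Q a b)
      ≤ ∑ a, ∑ b, (Q a b * (-(log (A a)) - log (B b)) + (A a * B b - Q a b)) := by
        apply Finset.sum_le_sum; intro a _; apply Finset.sum_le_sum; intro b _; exact key a b
    _ = (∑ a, negMulLog (A a)) + ∑ b, negMulLog (B b) := by
        simp only [expand, Finset.sum_add_distrib, Finset.sum_sub_distrib]
        rw [T1, T2, T3, hsum]
        ring

/-! ### Combinatorial lemmas -/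

def cnt (x : Cantor) (s : Finset ℕ) (l : ℕ) (w : Fin l → Bool) : ℕ :=
  (s.filter (fun i => ∀ j : Fin l, x (i + (j : ℕ)) = w j)).card

def app (l m : ℕ) (u : Fin l → Bool) (v : Fin m → Bool) : Fin (l + m) → Bool :=
  fun j => if h : (j : ℕ) < l then u ⟨j, h⟩ else v ⟨(j : ℕ) - l, by omega⟩

lemma app_bij (l m : ℕ) :
    Function.Bijective (fun p : (Fin l → Bool) × (Fin m → Bool) => app l m p.1 p.2) := by
  rw [Fintype.bijective_iff_injective_and_card]
  constructor
  · rintro ⟨u, v⟩ ⟨u', v'⟩ h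
    simp only [Prod.mk.injEq]
    constructor
    · funext j
      have := congrFun h ⟨(j : ℕ), by omega⟩
      simpa [app, j.isLt] using this
    · funext j
      have := congrFun h ⟨l + (j : ℕ), by omega⟩
      simpa [app, Nat.add_sub_cancel_left] using this
  · simp [Fintype.card_fun, ← pow_add]

lemma app_match (x : Cantor) (l m : ℕ) (u : Fin l → Bool) (v : Fin m → Bool) (i : ℕ) :
    (∀ j : Fin (l + m), x (i + (j : ℕ)) = app l m u v j) ↔
      (∀ j : Fin l, x (i + (j : ℕ)) = u j) ∧ (∀ j : Fin m, x (i + l + (j : ℕ)) = v j) := by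
  constructor
  · intro h
    constructor
    · intro j
      have := h ⟨(j : ℕ), by omega⟩
      simpa [app, j.isLt] using this
    · intro j
      have := h ⟨l + (j : ℕ), by omega⟩
      simpa [app, Nat.add_sub_cancel_left, add_assoc] using this
  · rintro ⟨h1, h2⟩ j
    by_cases hj : (j : ℕ) < l
    · simpa [app, hj] using h1 ⟨(j : ℕ), hj⟩
    · have e : (i + (j : ℕ)) = i + l + ((j : ℕ) - l) := by omega
      simp only [app, hj, dif_neg, not_false_iff]
      rw [e]
      exact h2 ⟨(j : ℕ) - l, by omega⟩

lemma sum_cnt (x : Cantor) (s : Finset ℕ) (l : ℕ) :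
    ∑ w : Fin l → Bool, cnt x s l w = s.card := by
  simp only [cnt, Finset.card_filter]
  rw [Finset.sum_comm]
  have : ∀ i ∈ s, (∑ w : Fin l → Bool, if ∀ j : Fin l, x (i + (j : ℕ)) = w j then 1 else 0) = 1 := by
    intro i _
    have : ∀ w : Fin l → Bool, (∀ j : Fin l, x (i + (j : ℕ)) = w j) ↔ w = fun j : Fin l => x (i + (j : ℕ)) := by
      intro w; constructor
      · intro h; funext j; exact (h j).symm
      · intro h j; rw [h]
    simp only [this]
    rw [Finset.sum_ite_eq' Finset.univ]
    simp
  rw [Finset.sum_congr rfl this, Finset.sum_const, smul_eq_mul, mul_one]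

lemma marg1 (x : Cantor) (s : Finset ℕ) (l m : ℕ) (u : Fin l → Bool) :
    ∑ v : Fin m → Bool, cnt x s (l + m) (app l m u v) = cnt x s l u := by
  simp only [cnt, Finset.card_filter]
  rw [Finset.sum_comm]
  refine Finset.sum_congr rfl fun i _ => ?_
  simp only [app_match]
  have : ∀ v : Fin m → Bool,
      ((∀ j : Fin l, x (i + (j : ℕ)) = u j) ∧ (∀ j : Fin m, x (i + l + (j : ℕ)) = v j)) ↔
      ((∀ j : Fin l, x (i + (j : ℕ)) = u j) ∧ v = fun j : Fin m => x (i + l + (j : ℕ))) := by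
    intro v
    constructor
    · rintro ⟨h1, h2⟩; exact ⟨h1, funext fun j => (h2 j).symm⟩
    · rintro ⟨h1, h2⟩; exact ⟨h1, fun j => by rw [h2]⟩
  simp only [this]
  by_cases hc : ∀ j : Fin l, x (i + (j : ℕ)) = u j
  · have step : ∀ v : Fin m → Bool,
        (if ((∀ j : Fin l, x (i + (j : ℕ)) = u j) ∧ v = fun j : Fin m => x (i + l + (j : ℕ)))
          then (1:ℕ) else 0) = if v = (fun j : Fin m => x (i + l + (j : ℕ))) then 1 else 0 := by
      intro v
      by_cases hv : v = fun j : Fin m => x (i + l + (j : ℕ))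
      · rw [if_pos ⟨hc, hv⟩, if_pos hv]
      · rw [if_neg (fun h => hv h.2), if_neg hv]
    rw [Finset.sum_congr rfl (fun v _ => step v), Finset.sum_ite_eq' Finset.univ, if_pos hc]
    simp
  · simp [hc]

lemma marg2 (x : Cantor) (s : Finset ℕ) (l m : ℕ) (v : Fin m → Bool) :
    ∑ u : Fin l → Bool, cnt x s (l + m) (app l m u v) =
      (s.filter (fun i => ∀ j : Fin m, x (i + l + (j : ℕ)) = v j)).card := by
  simp only [cnt, Finset.card_filter]
  rw [Finset.sum_comm]
  refine Finset.sum_congr rfl fun i _ => ?_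
  simp only [app_match]
  have : ∀ u : Fin l → Bool,
      ((∀ j : Fin l, x (i + (j : ℕ)) = u j) ∧ (∀ j : Fin m, x (i + l + (j : ℕ)) = v j)) ↔
      (u = (fun j : Fin l => x (i + (j : ℕ))) ∧ (∀ j : Fin m, x (i + l + (j : ℕ)) = v j)) := by
    intro u
    constructor
    · rintro ⟨h1, h2⟩; exact ⟨(funext fun j => (h1 j).symm), h2⟩
    · rintro ⟨h1, h2⟩; exact ⟨fun j => by rw [h1], h2⟩
  simp only [this]
  by_cases hc : ∀ j : Fin m, x (i + l + (j : ℕ)) = v j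
  · have step : ∀ u : Fin l → Bool,
        (if (u = (fun j : Fin l => x (i + (j : ℕ))) ∧ ∀ j : Fin m, x (i + l + (j : ℕ)) = v j)
          then (1:ℕ) else 0) = if u = (fun j : Fin l => x (i + (j : ℕ))) then 1 else 0 := by
      intro u
      by_cases hu : u = fun j : Fin l => x (i + (j : ℕ))
      · rw [if_pos ⟨hu, hc⟩, if_pos hu]
      · rw [if_neg (fun h => hu h.1), if_neg hu]
    rw [Finset.sum_congr rfl (fun u _ => step u), Finset.sum_ite_eq' Finset.univ, if_pos hc]
    simp
  · simp [hc]

lemma shift_card (x : Cantor) (N l m : ℕ) (v : Fin m → Bool) :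
    ((Finset.range N).filter (fun i => ∀ j : Fin m, x (i + l + (j : ℕ)) = v j)).card
      = ((Finset.Ico l (l + N)).filter (fun p => ∀ j : Fin m, x (p + (j : ℕ)) = v j)).card := by
  apply Finset.card_bij (fun i _ => i + l)
  · intro i hi
    simp only [Finset.mem_filter, Finset.mem_range] at hi
    simp only [Finset.mem_filter, Finset.mem_Ico]
    exact ⟨⟨by omega, by omega⟩, hi.2⟩
  · intro i hi i' hi' h; omega
  · intro p hp
    simp only [Finset.mem_filter, Finset.mem_Ico] at hp
    refine ⟨p - l, ?_, by omega⟩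
    simp only [Finset.mem_filter, Finset.mem_range]
    constructor
    · omega
    · intro j
      have := hp.2 j
      rw [← this]
      congr 1
      omega

lemma cnt_split (x : Cantor) (N' N l : ℕ) (h : N' ≤ N) (w : Fin l → Bool) :
    cnt x (Finset.range N) l w = cnt x (Finset.range N') l w + cnt x (Finset.Ico N' N) l w := by
  simp only [cnt]
  rw [Finset.range_eq_Ico, ← Finset.Ico_union_Ico_eq_Ico (Nat.zero_le N') h,
    Finset.filter_union, Finset.card_union_of_disjoint, ← Finset.range_eq_Ico]
  exact Finset.disjoint_filter_filter (Finset.Ico_disjoint_Ico_consecutive 0 N' N)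

lemma cnt_le (x : Cantor) (s : Finset ℕ) (l : ℕ) (w : Fin l → Bool) :
    cnt x s l w ≤ s.card := Finset.card_filter_le _ _

/-! ### Real comparison lemmas -/

lemma div_close {a c N' N mR : ℝ} (h1 : 1 ≤ N') (hN : N' ≤ N) (hNN : N ≤ N' + mR)
    (ha0 : 0 ≤ a) (hac : a ≤ c) (hca : c ≤ a + mR) (hcN : c ≤ N) :
    |a / N' - c / N| ≤ mR / N' := by
  have hN'0 : (0:ℝ) < N' := by linarith
  have hN0 : (0:ℝ) < N := by linarith
  have hm : 0 ≤ mR := by linarith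
  rw [abs_sub_le_iff]
  constructor
  · rw [div_sub_div a c hN'0.ne' hN0.ne', div_le_div_iff₀ (by positivity) hN'0]
    have k1 : a * N - N' * c ≤ mR * N := by
      nlinarith [mul_le_mul_of_nonneg_right hac hN0.le,
        mul_le_mul_of_nonneg_left (show N - N' ≤ mR by linarith) (ha0.trans hac),
        mul_le_mul_of_nonneg_right hcN hm]
    nlinarith [mul_le_mul_of_nonneg_right k1 hN'0.le]
  · rw [div_sub_div c a hN0.ne' hN'0.ne', div_le_div_iff₀ (by positivity) hN'0]
    have k2 : c * N' - N * a ≤ mR * N := by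
      nlinarith [mul_le_mul_of_nonneg_right hca hN'0.le,
        mul_le_mul_of_nonneg_left hN ha0,
        mul_le_mul_of_nonneg_left (show N' ≤ N by linarith) hm]
    nlinarith [mul_le_mul_of_nonneg_right k2 hN'0.le]

lemma sum_eta_close {α : Type*} [Fintype α] (f g : α → ℝ) (δ : ℝ)
    (hf0 : ∀ a, 0 ≤ f a) (hf1 : ∀ a, f a ≤ 1) (hg0 : ∀ a, 0 ≤ g a) (hg1 : ∀ a, g a ≤ 1)
    (hfg : ∀ a, |f a - g a| ≤ δ) (hδ : δ ≤ 1) :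
    ∑ a, negMulLog (f a) ≤ (∑ a, negMulLog (g a)) + (Fintype.card α : ℝ) * (negMulLog δ + δ) := by
  have key : ∀ a, negMulLog (f a) ≤ negMulLog (g a) + (negMulLog δ + δ) := by
    intro a
    have h1 := eta_close (hf0 a) (hg0 a) (hf1 a) (hg1 a) (hfg a) hδ
    have h2 := abs_le.mp h1
    linarith [h2.2]
  calc ∑ a, negMulLog (f a) ≤ ∑ a, (negMulLog (g a) + (negMulLog δ + δ)) :=
        Finset.sum_le_sum fun a _ => key a
    _ = (∑ a, negMulLog (g a)) + (Fintype.card α : ℝ) * (negMulLog δ + δ) := by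
        rw [Finset.sum_add_distrib, Finset.sum_const, Finset.card_univ, nsmul_eq_mul]

end SlidingAux

open SlidingAux in
/-- (l+m)·H_{l+m} ≤ l·H_l + m·H_m + o(n)/n, error depending only on l, m. -/
theorem sliding_entropy_subadditive
    (l m : ℕ) (hl : 0 < l) (hm : 0 < m) :
    ∃ e : ℕ → ℝ, Tendsto e atTop (nhds 0) ∧
      ∀ (x : Cantor) (n : ℕ),
        ((l + m : ℕ) : ℝ) * slidingH x n (l + m) ≤
          (l : ℝ) * slidingH x n l + (m : ℝ) * slidingH x n m + e n := by
  classical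
  set dA : ℕ → ℝ := fun n => min 1 ((m : ℝ) / ((n - (l + m) + 1 : ℕ) : ℝ)) with hdA
  set dB : ℕ → ℝ := fun n => min 1 ((l : ℝ) / ((n - (l + m) + 1 : ℕ) : ℝ)) with hdB
  have hlog2 : (0:ℝ) < Real.log 2 := Real.log_pos one_lt_two
  refine ⟨fun n => ((2:ℝ)^l * (Real.negMulLog (dA n) + dA n)
      + (2:ℝ)^m * (Real.negMulLog (dB n) + dB n)) / Real.log 2, ?_, ?_⟩
  · -- tendsto 0
    have hNtop : Tendsto (fun n : ℕ => ((n - (l + m) + 1 : ℕ) : ℝ)) atTop atTop := by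
      apply tendsto_natCast_atTop_atTop.comp
      exact (tendsto_add_atTop_nat 1).comp (tendsto_sub_atTop_nat (l + m))
    have hAq : Tendsto (fun n : ℕ => (m : ℝ) / ((n - (l + m) + 1 : ℕ) : ℝ)) atTop (nhds 0) :=
      Tendsto.div_atTop tendsto_const_nhds hNtop
    have hBq : Tendsto (fun n : ℕ => (l : ℝ) / ((n - (l + m) + 1 : ℕ) : ℝ)) atTop (nhds 0) :=
      Tendsto.div_atTop tendsto_const_nhds hNtop
    have hA0 : ∀ n, 0 ≤ dA n := fun n => le_min zero_le_one (by positivity)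
    have hB0 : ∀ n, 0 ≤ dB n := fun n => le_min zero_le_one (by positivity)
    have hAlim : Tendsto dA atTop (nhds 0) :=
      tendsto_of_tendsto_of_tendsto_of_le_of_le tendsto_const_nhds hAq hA0
        (fun n => min_le_right _ _)
    have hBlim : Tendsto dB atTop (nhds 0) :=
      tendsto_of_tendsto_of_tendsto_of_le_of_le tendsto_const_nhds hBq hB0
        (fun n => min_le_right _ _)
    have hetaA : Tendsto (fun n => Real.negMulLog (dA n) + dA n) atTop (nhds 0) := by
      have h := (Real.continuous_negMulLog.tendsto 0).comp hAlim
      rw [Real.negMulLog_zero] at h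
      simpa using h.add hAlim
    have hetaB : Tendsto (fun n => Real.negMulLog (dB n) + dB n) atTop (nhds 0) := by
      have h := (Real.continuous_negMulLog.tendsto 0).comp hBlim
      rw [Real.negMulLog_zero] at h
      simpa using h.add hBlim
    have := ((hetaA.const_mul ((2:ℝ)^l)).add (hetaB.const_mul ((2:ℝ)^m))).div_const (Real.log 2)
    simpa using this
  · intro x n
    have hfold : ∀ (k : ℕ), 0 < k →
        (k : ℝ) * slidingH x n k = ∑ w : Fin k → Bool, negMulLog2 (slidingP x n k w) := by
      intro k hk
      have hk' : (k : ℝ) ≠ 0 := Nat.cast_ne_zero.mpr hk.ne'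
      rw [slidingH, ← mul_assoc, mul_one_div, div_self hk', one_mul]
    rw [hfold _ (by omega), hfold _ hl, hfold _ hm]
    have hnml2 : ∀ p : ℝ, negMulLog2 p = Real.negMulLog p / Real.log 2 := by
      intro p
      simp only [negMulLog2, Real.negMulLog, Real.logb]
      ring
    simp only [hnml2, ← Finset.sum_div]
    rw [← add_div, ← add_div]
    gcongr
    -- core inequality in negMulLog-land
    set nN' : ℕ := n - (l + m) + 1 with hnN'
    have hP : ∀ w : Fin (l+m) → Bool,
        slidingP x n (l+m) w = (cnt x (Finset.range nN') (l+m) w : ℝ) / (nN' : ℝ) := fun w => rfl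
    have hPl : ∀ u : Fin l → Bool,
        slidingP x n l u = (cnt x (Finset.range (n - l + 1)) l u : ℝ) / ((n - l + 1 : ℕ) : ℝ) :=
      fun u => rfl
    have hPm : ∀ v : Fin m → Bool,
        slidingP x n m v = (cnt x (Finset.range (n - m + 1)) m v : ℝ) / ((n - m + 1 : ℕ) : ℝ) :=
      fun v => rfl
    have hN'1 : (1:ℝ) ≤ (nN' : ℝ) := by exact_mod_cast Nat.one_le_iff_ne_zero.mpr (by omega)
    have hN'0 : (0:ℝ) < (nN' : ℝ) := by linarith
    set Q : (Fin l → Bool) → (Fin m → Bool) → ℝ :=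
      fun u v => slidingP x n (l+m) (app l m u v) with hQdef
    have hreindex : ∀ F : (Fin (l+m) → Bool) → ℝ,
        ∑ u, ∑ v, F (app l m u v) = ∑ w, F w := by
      intro F
      have h := Fintype.sum_bijective _ (app_bij l m)
        (fun p : (Fin l → Bool) × (Fin m → Bool) => F (app l m p.1 p.2)) F (fun p => rfl)
      exact (Fintype.sum_prod_type _).symm.trans h
    have hsumP : ∀ (k : ℕ), ∑ w : Fin k → Bool, slidingP x n k w = 1 := by
      intro k
      have : ∀ w : Fin k → Bool, slidingP x n k w
          = (cnt x (Finset.range (n - k + 1)) k w : ℝ) / ((n - k + 1 : ℕ) : ℝ) := fun w => rfl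
      simp only [this, ← Finset.sum_div]
      rw [← Nat.cast_sum, sum_cnt, Finset.card_range]
      exact div_self (Nat.cast_ne_zero.mpr (by omega))
    have hQ0 : ∀ u v, 0 ≤ Q u v := by
      intro u v
      rw [hQdef]
      simp only [hP]
      positivity
    have hQsum : ∑ u, ∑ v, Q u v = 1 := by
      rw [hQdef]
      rw [hreindex (fun w => slidingP x n (l+m) w)]
      exact hsumP (l+m)
    have hstep1 : ∑ w : Fin (l+m) → Bool, negMulLog (slidingP x n (l+m) w)
        = ∑ u, ∑ v, negMulLog (Q u v) := by
      rw [hQdef]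
      exact (hreindex (fun w => negMulLog (slidingP x n (l+m) w))).symm
    have hsub := entropy_subadd Q hQ0 hQsum
    -- identify marginals
    have hAeq : ∀ u, ∑ v, Q u v = (cnt x (Finset.range nN') l u : ℝ) / (nN' : ℝ) := by
      intro u
      rw [hQdef]
      simp only [hP, ← Finset.sum_div]
      rw [← Nat.cast_sum, marg1]
    have hBeq : ∀ v, ∑ u, Q u v
        = (((Finset.range nN').filter (fun i => ∀ j : Fin m, x (i + l + (j : ℕ)) = v j)).card : ℝ)
          / (nN' : ℝ) := by
      intro v
      rw [hQdef]
      simp only [hP, ← Finset.sum_div]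
      rw [← Nat.cast_sum, marg2]
    -- bounds in [0,1]
    have hbound : ∀ (N : ℕ) (c : ℕ), c ≤ N → 1 ≤ N → (0:ℝ) ≤ (c:ℝ)/(N:ℝ) ∧ (c:ℝ)/(N:ℝ) ≤ 1 := by
      intro N c hc hN
      have hN0 : (0:ℝ) < (N:ℝ) := by exact_mod_cast hN
      exact ⟨by positivity, by rw [div_le_one hN0]; exact_mod_cast hc⟩
    -- closeness of first marginal
    have hcloseA : ∀ u, |(∑ v, Q u v) - slidingP x n l u| ≤ dA n := by
      intro u
      rw [hAeq, hPl, hdA]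
      refine le_min ?_ ?_
      · have b1 := hbound nN' (cnt x (Finset.range nN') l u)
          ((cnt_le _ _ _ _).trans_eq (Finset.card_range _)) (by omega)
        have b2 := hbound (n - l + 1) (cnt x (Finset.range (n - l + 1)) l u)
          ((cnt_le _ _ _ _).trans_eq (Finset.card_range _)) (by omega)
        rw [abs_sub_le_iff]
        constructor <;> linarith [b1.1, b1.2, b2.1, b2.2]
      · have hsplit := cnt_split x nN' (n - l + 1) l (by omega) u
        have hext : cnt x (Finset.Ico nN' (n - l + 1)) l u ≤ m := by
          calc cnt x (Finset.Ico nN' (n - l + 1)) l u ≤ (Finset.Ico nN' (n - l + 1)).card :=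
              cnt_le _ _ _ _
          _ = (n - l + 1) - nN' := Nat.card_Ico _ _
          _ ≤ m := by omega
        apply div_close hN'1
        · exact_mod_cast Nat.le_of_lt_succ (by omega : nN' < (n - l + 1) + 1)
        · push_cast
          have : (n - l + 1) ≤ nN' + m := by omega
          exact_mod_cast this
        · positivity
        · exact_mod_cast Nat.le.intro hsplit.symm
        · have : cnt x (Finset.range (n - l + 1)) l u ≤ cnt x (Finset.range nN') l u + m := by
            omega
          exact_mod_cast this
        · have := (cnt_le x (Finset.range (n - l + 1)) l u).trans_eq (Finset.card_range _)
          exact_mod_cast this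
    -- closeness of second marginal
    have hcloseB : ∀ v, |(∑ u, Q u v) - slidingP x n m v| ≤ dB n := by
      intro v
      rw [hBeq, hPm, hdB]
      have hDnum : ((Finset.range nN').filter
          (fun i => ∀ j : Fin m, x (i + l + (j : ℕ)) = v j)).card ≤ nN' :=
        (Finset.card_filter_le _ _).trans_eq (Finset.card_range _)
      have b1 := hbound nN' _ hDnum (by omega)
      have b2 := hbound (n - m + 1) (cnt x (Finset.range (n - m + 1)) m v)
        ((cnt_le _ _ _ _).trans_eq (Finset.card_range _)) (by omega)
      refine le_min ?_ ?_
      · rw [abs_sub_le_iff]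
        constructor <;> linarith [b1.1, b1.2, b2.1, b2.2]
      · by_cases hn : l + m ≤ n
        · -- genuine estimate
          have hNm : l + nN' = n - m + 1 := by omega
          have hshift := shift_card x nN' l m v
          rw [hNm] at hshift
          have hsplit := cnt_split x l (n - m + 1) m (by omega) v
          have hIco : cnt x (Finset.Ico l (n - m + 1)) m v
              = ((Finset.range nN').filter
                  (fun i => ∀ j : Fin m, x (i + l + (j : ℕ)) = v j)).card := by
            rw [hshift]; rfl
          have hE : cnt x (Finset.range l) m v ≤ l :=
            (cnt_le _ _ _ _).trans_eq (Finset.card_range _)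
          apply div_close hN'1
          · exact_mod_cast (by omega : nN' ≤ n - m + 1)
          · push_cast
            exact_mod_cast (by omega : n - m + 1 ≤ nN' + l)
          · positivity
          · rw [← hIco]
            exact_mod_cast (by omega : cnt x (Finset.Ico l (n - m + 1)) m v
              ≤ cnt x (Finset.range (n - m + 1)) m v)
          · rw [← hIco]
            exact_mod_cast (by omega : cnt x (Finset.range (n - m + 1)) m v
              ≤ cnt x (Finset.Ico l (n - m + 1)) m v + l)
          · have := (cnt_le x (Finset.range (n - m + 1)) m v).trans_eq (Finset.card_range _)
            exact_mod_cast this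
        · -- degenerate case: nN' = 1
          have h1 : nN' = 1 := by omega
          have hb : |(((Finset.range nN').filter
              (fun i => ∀ j : Fin m, x (i + l + (j : ℕ)) = v j)).card : ℝ) / (nN' : ℝ)
              - (cnt x (Finset.range (n - m + 1)) m v : ℝ) / ((n - m + 1 : ℕ) : ℝ)| ≤ 1 := by
            rw [abs_sub_le_iff]
            constructor <;> linarith [b1.1, b1.2, b2.1, b2.2]
          calc _ ≤ (1:ℝ) := hb
          _ ≤ (l : ℝ) / (nN' : ℝ) := by
            rw [h1]
            simp only [Nat.cast_one, div_one]
            exact_mod_cast hl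
    -- bounds for marginals
    have hA01 : ∀ u, 0 ≤ ∑ v, Q u v ∧ (∑ v, Q u v) ≤ 1 := by
      intro u
      rw [hAeq]
      exact hbound nN' _ ((cnt_le _ _ _ _).trans_eq (Finset.card_range _)) (by omega)
    have hB01 : ∀ v, 0 ≤ ∑ u, Q u v ∧ (∑ u, Q u v) ≤ 1 := by
      intro v
      rw [hBeq]
      exact hbound nN' _ ((Finset.card_filter_le _ _).trans_eq (Finset.card_range _)) (by omega)
    have hPl01 : ∀ u, 0 ≤ slidingP x n l u ∧ slidingP x n l u ≤ 1 := by
      intro u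
      rw [hPl]
      exact hbound _ _ ((cnt_le _ _ _ _).trans_eq (Finset.card_range _)) (by omega)
    have hPm01 : ∀ v, 0 ≤ slidingP x n m v ∧ slidingP x n m v ≤ 1 := by
      intro v
      rw [hPm]
      exact hbound _ _ ((cnt_le _ _ _ _).trans_eq (Finset.card_range _)) (by omega)
    -- sum-level comparisons
    have hcardl : (Fintype.card (Fin l → Bool) : ℝ) = (2:ℝ)^l := by
      simp [Fintype.card_fun]
    have hcardm : (Fintype.card (Fin m → Bool) : ℝ) = (2:ℝ)^m := by
      simp [Fintype.card_fun]
    have hSA : ∑ u, negMulLog (∑ v, Q u v)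
        ≤ (∑ u, negMulLog (slidingP x n l u)) + (2:ℝ)^l * (negMulLog (dA n) + dA n) := by
      rw [← hcardl]
      exact sum_eta_close _ _ _ (fun u => (hA01 u).1) (fun u => (hA01 u).2)
        (fun u => (hPl01 u).1) (fun u => (hPl01 u).2) hcloseA (min_le_left _ _)
    have hSB : ∑ v, negMulLog (∑ u, Q u v)
        ≤ (∑ v, negMulLog (slidingP x n m v)) + (2:ℝ)^m * (negMulLog (dB n) + dB n) := by
      rw [← hcardm]
      exact sum_eta_close _ _ _ (fun v => (hB01 v).1) (fun v => (hB01 v).2)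
        (fun v => (hPm01 v).1) (fun v => (hPm01 v).2) hcloseB (min_le_left _ _)
    rw [hstep1]
    linarith



end
end

section
/- For any x ∈ {0,1}^∞ and positive integers l, m, the sliding block entropies satisfy H_{ml}(x_0^{n-1}) ≤ H_l(x_0^{n-1}) + o(n)/n, where the error term depends only on l and m. -/
open MeasureTheory Filter Topology Real
open scoped ENNReal

noncomputable section

/-! ### Auxiliary lemmas for STATEMENT 2 -/



namespace SlidingAux

/-- `negMulLog` is subadditive on nonneg reals. -/
lemma negMulLog_add_le {a b : ℝ} (ha : 0 ≤ a) (hb : 0 ≤ b) :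
    Real.negMulLog (a + b) ≤ Real.negMulLog a + Real.negMulLog b := by
  have key : ∀ c d : ℝ, 0 ≤ c → c ≤ d → 0 < d → -(c * Real.log d) ≤ Real.negMulLog c := by
    intro c d hc hcd hd
    rcases eq_or_lt_of_le hc with h | h
    · simp [← h, Real.negMulLog]
    · have : Real.log c ≤ Real.log d := Real.log_le_log h hcd
      have := mul_le_mul_of_nonneg_left this hc
      simp only [Real.negMulLog, neg_mul]
      linarith
  rcases eq_or_lt_of_le (add_nonneg ha hb) with h | h
  · have ha0 : a = 0 := by linarith [ha, hb]
    have hb0 : b = 0 := by linarith [ha, hb]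
    simp [ha0, hb0]
  · have e : Real.negMulLog (a + b) = -(a * Real.log (a+b)) + -(b * Real.log (a+b)) := by
      simp only [Real.negMulLog, neg_mul]; ring
    rw [e]
    exact add_le_add (key a (a+b) ha (by linarith) h) (key b (a+b) hb (by linarith) h)

/-- `t + negMulLog t` is monotone on `[0,1]`. -/
lemma negMulLog_lip {a b : ℝ} (ha : 0 ≤ a) (hab : a ≤ b) (hb : b ≤ 1) :
    Real.negMulLog a ≤ Real.negMulLog b + (b - a) := by
  have mono : MonotoneOn (fun t => t + Real.negMulLog t) (Set.Icc (0:ℝ) 1) := by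
    have hc : ContinuousOn (fun t : ℝ => t + Real.negMulLog t) (Set.Icc (0:ℝ) 1) :=
      (continuous_id.add Real.continuous_negMulLog).continuousOn
    apply monotoneOn_of_deriv_nonneg (convex_Icc 0 1) hc
    · intro t ht
      rw [interior_Icc] at ht
      have hd : HasDerivAt (fun t : ℝ => t + Real.negMulLog t) (1 + (-Real.log t - 1)) t :=
        (hasDerivAt_id t).add (Real.hasDerivAt_negMulLog (ne_of_gt ht.1))
      apply hd.differentiableAt.differentiableWithinAt
    · intro t ht
      rw [interior_Icc] at ht
      have hd : HasDerivAt (fun t : ℝ => t + Real.negMulLog t) (1 + (-Real.log t - 1)) t :=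
        (hasDerivAt_id t).add (Real.hasDerivAt_negMulLog (ne_of_gt ht.1))
      rw [hd.deriv]
      have : Real.log t < 0 := Real.log_neg ht.1 ht.2
      linarith
  have := mono (Set.mem_Icc.2 ⟨ha, le_trans hab hb⟩) (Set.mem_Icc.2 ⟨le_trans ha hab, hb⟩) hab
  simp only at this
  linarith

/-- `negMulLog c ≤ 2√c` for `c ∈ [0,1]`. -/
lemma negMulLog_le_two_sqrt {c : ℝ} (hc : 0 ≤ c) (hc1 : c ≤ 1) :
    Real.negMulLog c ≤ 2 * Real.sqrt c := by
  rcases eq_or_lt_of_le hc with h | h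
  · simp [← h]
  · have hs : 0 < Real.sqrt c := Real.sqrt_pos.2 h
    have h1 : -Real.log c = 2 * (-Real.log (Real.sqrt c)) := by
      rw [Real.log_sqrt hc]; ring
    have h2 : -Real.log (Real.sqrt c) ≤ (Real.sqrt c)⁻¹ := by
      have := Real.log_le_sub_one_of_pos (show (0:ℝ) < (Real.sqrt c)⁻¹ by positivity)
      rw [Real.log_inv] at this
      have : -Real.log (Real.sqrt c) ≤ (Real.sqrt c)⁻¹ - 1 := this
      linarith
    have : Real.negMulLog c = c * (-Real.log c) := by
      simp [Real.negMulLog]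
    rw [this, h1]
    calc c * (2 * (-Real.log (Real.sqrt c))) ≤ c * (2 * (Real.sqrt c)⁻¹) := by
          apply mul_le_mul_of_nonneg_left _ hc
          linarith
      _ = 2 * Real.sqrt c := by
          field_simp
          rw [Real.sq_sqrt hc]
  
/-- modulus of continuity for negMulLog. -/
lemma negMulLog_diff_le {p q δ : ℝ} (hp0 : 0 ≤ p) (hp1 : p ≤ 1) (hq0 : 0 ≤ q) (hq1 : q ≤ 1)
    (hd : |p - q| ≤ δ) :
    Real.negMulLog p ≤ Real.negMulLog q + (2 * Real.sqrt δ + δ) := by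
  have hδ : 0 ≤ δ := le_trans (abs_nonneg _) hd
  rcases le_total p q with h | h
  · have := negMulLog_lip hp0 h hq1
    have h2 : q - p ≤ δ := by rw [abs_sub_comm] at hd; calc q - p ≤ |q - p| := le_abs_self _
                                                           _ ≤ δ := hd
    have : Real.negMulLog p ≤ Real.negMulLog q + δ := by linarith
    have hs : 0 ≤ Real.sqrt δ := Real.sqrt_nonneg δ
    linarith
  · have key : Real.negMulLog p ≤ Real.negMulLog q + Real.negMulLog (p - q) := by
      have := negMulLog_add_le hq0 (by linarith : (0:ℝ) ≤ p - q)
      have e : q + (p - q) = p := by ring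
      rw [e] at this
      linarith
    have h2 : Real.negMulLog (p - q) ≤ 2 * Real.sqrt (p - q) :=
      negMulLog_le_two_sqrt (by linarith) (by linarith)
    have h3 : Real.sqrt (p - q) ≤ Real.sqrt δ := by
      apply Real.sqrt_le_sqrt
      calc p - q ≤ |p - q| := le_abs_self _
        _ ≤ δ := hd
    linarith

end SlidingAux


namespace SlidingAux

lemma entropy_subadd_s2 {α β : Type*} [Fintype α] [Fintype β] [DecidableEq α] [DecidableEq β]
    (Q : α → ℝ) (hQ0 : ∀ a, 0 ≤ Q a) (hQ1 : ∑ a, Q a = 1)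
    (M : ℕ) (r : Fin M → α → β)
    (hinj : ∀ a a', (∀ t, r t a = r t a') → a = a') :
    ∑ a, Real.negMulLog (Q a) ≤
      ∑ t : Fin M, ∑ c : β,
        Real.negMulLog (∑ a ∈ Finset.univ.filter (fun a => r t a = c), Q a) := by
  classical
  set marg : Fin M → β → ℝ := fun t c => ∑ a ∈ Finset.univ.filter (fun a => r t a = c), Q a
    with hmarg
  have hmarg0 : ∀ t c, 0 ≤ marg t c := fun t c => Finset.sum_nonneg (fun a _ => hQ0 a)
  have hmargsum : ∀ t, ∑ c, marg t c = 1 := by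
    intro t
    rw [hmarg]
    rw [Finset.sum_fiberwise Finset.univ (fun a => r t a) Q]
    exact hQ1
  have hQle : ∀ t a, Q a ≤ marg t (r t a) := by
    intro t a
    exact Finset.single_le_sum (f := Q) (fun i _ => hQ0 i)
      (Finset.mem_filter.2 ⟨Finset.mem_univ a, rfl⟩)
  set q : α → ℝ := fun a => ∏ t, marg t (r t a) with hq
  have hq0 : ∀ a, 0 ≤ q a := fun a => Finset.prod_nonneg (fun t _ => hmarg0 t _)
  have hqpos : ∀ a, 0 < Q a → 0 < q a := by
    intro a ha
    exact Finset.prod_pos (fun t _ => lt_of_lt_of_le ha (hQle t a))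
  -- sum of q ≤ 1
  have hqsum : ∑ a, q a ≤ 1 := by
    set R : α → (Fin M → β) := fun a t => r t a with hR
    have hRinj : ∀ a ∈ Finset.univ, ∀ a' ∈ Finset.univ, R a = R a' → a = a' := by
      intro a _ a' _ h
      exact hinj a a' (fun t => congrFun h t)
    have h1 : ∑ a, q a = ∑ u ∈ Finset.univ.image R, ∏ t, marg t (u t) := by
      rw [Finset.sum_image hRinj]
    have h2 : ∑ u ∈ Finset.univ.image R, ∏ t, marg t (u t)
        ≤ ∑ u : Fin M → β, ∏ t, marg t (u t) := by
      apply Finset.sum_le_sum_of_subset_of_nonneg (Finset.subset_univ _)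
      intro u _ _
      exact Finset.prod_nonneg (fun t _ => hmarg0 t _)
    have h3 : ∑ u : Fin M → β, ∏ t, marg t (u t) = 1 := by
      rw [← Fintype.piFinset_univ, Finset.sum_prod_piFinset]
      simp [hmargsum]
    rw [h1]; rw [h3] at h2; exact h2
  -- Gibbs inequality
  have gibbs : ∑ a, Real.negMulLog (Q a) ≤ ∑ a, -(Q a * Real.log (q a)) := by
    have key : ∀ a, Q a * Real.log (q a) - Q a * Real.log (Q a) ≤ q a - Q a := by
      intro a
      rcases eq_or_lt_of_le (hQ0 a) with h | h
      · simp [← h]; exact hq0 a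
      · have hqa := hqpos a h
        have hlog : Real.log (q a) - Real.log (Q a) ≤ q a / Q a - 1 := by
          have := Real.log_le_sub_one_of_pos (show 0 < q a / Q a by positivity)
          rwa [Real.log_div (ne_of_gt hqa) (ne_of_gt h)] at this
        have := mul_le_mul_of_nonneg_left hlog (le_of_lt h)
        have e : Q a * (q a / Q a - 1) = q a - Q a := by field_simp
        rw [e] at this
        linarith [this, mul_sub (Q a) (Real.log (q a)) (Real.log (Q a))]
    have hsum : ∑ a, (Q a * Real.log (q a) - Q a * Real.log (Q a)) ≤ ∑ a, (q a - Q a) :=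
      Finset.sum_le_sum (fun a _ => key a)
    rw [Finset.sum_sub_distrib, Finset.sum_sub_distrib, hQ1] at hsum
    have e1 : ∑ a, Real.negMulLog (Q a) = -∑ a, Q a * Real.log (Q a) := by
      simp [Real.negMulLog, Finset.sum_neg_distrib, neg_mul]
    have e2 : ∑ a, -(Q a * Real.log (q a)) = -∑ a, Q a * Real.log (q a) := by
      simp
    rw [e1, e2]
    linarith
  -- rewrite cross entropy as sum of marginal entropies
  have cross : ∑ a, -(Q a * Real.log (q a))
      = ∑ t : Fin M, ∑ c : β, Real.negMulLog (marg t c) := by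
    have step1 : ∀ a, -(Q a * Real.log (q a)) = ∑ t, -(Q a * Real.log (marg t (r t a))) := by
      intro a
      rcases eq_or_lt_of_le (hQ0 a) with h | h
      · simp [← h]
      · have hfac : ∀ t ∈ Finset.univ, marg t (r t a) ≠ 0 :=
          fun t _ => ne_of_gt (lt_of_lt_of_le h (hQle t a))
        rw [hq]
        simp only
        rw [Real.log_prod hfac, Finset.mul_sum]
        simp
    rw [Finset.sum_congr rfl (fun a _ => step1 a), Finset.sum_comm]
    apply Finset.sum_congr rfl
    intro t _
    rw [← Finset.sum_fiberwise Finset.univ (fun a => r t a)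
      (fun a => -(Q a * Real.log (marg t (r t a))))]
    apply Finset.sum_congr rfl
    intro c _
    have : ∀ a ∈ Finset.univ.filter (fun a => r t a = c),
        -(Q a * Real.log (marg t (r t a))) = Q a * (-Real.log (marg t c)) := by
      intro a ha
      have := (Finset.mem_filter.1 ha).2
      rw [this]; ring
    rw [Finset.sum_congr rfl this, ← Finset.sum_mul]
    simp [Real.negMulLog, hmarg]
  calc ∑ a, Real.negMulLog (Q a) ≤ ∑ a, -(Q a * Real.log (q a)) := gibbs
    _ = _ := cross

end SlidingAux

namespace SlidingAux

lemma negMulLog2_eq (p : ℝ) : negMulLog2 p = Real.negMulLog p / Real.log 2 := by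
  rw [negMulLog2, Real.logb, Real.negMulLog]; ring

lemma denom_pos (n k : ℕ) : (0:ℝ) < ((n - k + 1 : ℕ) : ℝ) := by
  have : 0 < n - k + 1 := Nat.succ_pos _
  exact_mod_cast this

lemma slidingP_nonneg (x : Cantor) (n k : ℕ) (w : Fin k → Bool) : 0 ≤ slidingP x n k w := by
  unfold slidingP
  positivity

lemma slidingP_le_one (x : Cantor) (n k : ℕ) (w : Fin k → Bool) : slidingP x n k w ≤ 1 := by
  unfold slidingP
  rw [div_le_one (denom_pos n k)]
  have := Finset.card_filter_le (Finset.range (n - k + 1))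
    (fun i => ∀ j : Fin k, x (i + (j : ℕ)) = w j)
  rw [Finset.card_range] at this
  exact_mod_cast this

/-- the fibers of `i ↦ (its k-block word)` : counting. -/
lemma card_fiber_eq (x : Cantor) (N k : ℕ) (S : Finset (Fin k → Bool))
    (B : Finset ℕ) (hB : B ⊆ Finset.range N)
    (hmem : ∀ i ∈ B, (fun j : Fin k => x (i + (j : ℕ))) ∈ S)
    (hmem' : ∀ i ∈ Finset.range N, (fun j : Fin k => x (i + (j : ℕ))) ∈ S → i ∈ B) :
    ∑ u ∈ S, ((Finset.range N).filter (fun i => ∀ j : Fin k, x (i + (j : ℕ)) = u j)).card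
      = B.card := by
  classical
  rw [Finset.card_eq_sum_card_fiberwise hmem]
  apply Finset.sum_congr rfl
  intro u hu
  congr 1
  ext i
  simp only [Finset.mem_filter, Finset.mem_range]
  constructor
  · rintro ⟨hiN, hcond⟩
    have hfe : (fun j : Fin k => x (i + (j : ℕ))) = u := funext hcond
    exact ⟨hmem' i (Finset.mem_range.2 hiN) (hfe ▸ hu), hfe⟩
  · rintro ⟨hiB, hfe⟩
    exact ⟨Finset.mem_range.1 (hB hiB), fun j => congrFun hfe j⟩

lemma sum_slidingP (x : Cantor) (n k : ℕ) :
    ∑ w : Fin k → Bool, slidingP x n k w = 1 := by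
  classical
  unfold slidingP
  rw [← Finset.sum_div]
  rw [show ∑ w : Fin k → Bool,
        ((((Finset.range (n - k + 1)).filter
          (fun i => ∀ j : Fin k, x (i + (j : ℕ)) = w j)).card : ℝ))
      = ((∑ w : Fin k → Bool,
        (((Finset.range (n - k + 1)).filter
          (fun i => ∀ j : Fin k, x (i + (j : ℕ)) = w j)).card) : ℕ) : ℝ) by push_cast; rfl]
  rw [card_fiber_eq x (n - k + 1) k Finset.univ (Finset.range (n - k + 1))
    (le_refl _) (fun i _ => Finset.mem_univ _) (fun i hi _ => hi)]
  rw [Finset.card_range]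
  exact div_self (ne_of_gt (denom_pos n k))

lemma fin_lt_bound (m l : ℕ) (t : Fin m) (j : Fin l) : (t:ℕ) * l + (j:ℕ) < m * l := by
  calc (t:ℕ) * l + (j:ℕ) < (t:ℕ) * l + l := by omega
    _ = ((t:ℕ) + 1) * l := by ring
    _ ≤ m * l := Nat.mul_le_mul_right l t.2

/-- restriction of an `ml`-word to its `t`-th `l`-block. -/
def rblk (m l : ℕ) (t : Fin m) (u : Fin (m * l) → Bool) : Fin l → Bool :=
  fun j => u ⟨(t:ℕ) * l + (j:ℕ), fin_lt_bound m l t j⟩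

lemma rblk_inj (m l : ℕ) (hl : 0 < l) (u u' : Fin (m * l) → Bool)
    (h : ∀ t, rblk m l t u = rblk m l t u') : u = u' := by
  funext k
  have hdiv : (k:ℕ) / l < m := by
    rw [Nat.div_lt_iff_lt_mul hl]
    exact k.2
  have key := congrFun (h ⟨(k:ℕ)/l, hdiv⟩) ⟨(k:ℕ) % l, Nat.mod_lt _ hl⟩
  unfold rblk at key
  have e : (⟨(k:ℕ)/l * l + (k:ℕ) % l,
      fin_lt_bound m l ⟨(k:ℕ)/l, hdiv⟩ ⟨(k:ℕ) % l, Nat.mod_lt _ hl⟩⟩ : Fin (m*l)) = k :=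
    Fin.ext (Nat.div_add_mod' _ _)
  simpa [e] using key

/-- marginal of the sliding `ml`-block distribution. -/
lemma marg_slidingP (x : Cantor) (n m l : ℕ) (t : Fin m) (w : Fin l → Bool) :
    ∑ u ∈ Finset.univ.filter (fun u : Fin (m * l) → Bool => rblk m l t u = w),
      slidingP x n (m * l) u
    = (((Finset.range (n - m * l + 1)).filter
        (fun i => ∀ j : Fin l, x (i + ((t:ℕ) * l + (j:ℕ))) = w j)).card : ℝ)
      / ((n - m * l + 1 : ℕ) : ℝ) := by
  classical
  unfold slidingP
  rw [← Finset.sum_div]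
  congr 1
  set N := n - m * l + 1
  set B := (Finset.range N).filter (fun i => ∀ j : Fin l, x (i + ((t:ℕ) * l + (j:ℕ))) = w j)
    with hBdef
  have hB : B ⊆ Finset.range N := Finset.filter_subset _ _
  have hmem : ∀ i ∈ B, (fun j : Fin (m * l) => x (i + (j : ℕ)))
      ∈ Finset.univ.filter (fun u : Fin (m * l) → Bool => rblk m l t u = w) := by
    intro i hi
    rw [Finset.mem_filter]
    refine ⟨Finset.mem_univ _, ?_⟩
    funext j
    have := (Finset.mem_filter.1 hi).2 j
    simpa [rblk] using this
  have hmem' : ∀ i ∈ Finset.range N, (fun j : Fin (m * l) => x (i + (j : ℕ)))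
      ∈ Finset.univ.filter (fun u : Fin (m * l) → Bool => rblk m l t u = w) → i ∈ B := by
    intro i hi hf
    rw [Finset.mem_filter] at hf
    rw [hBdef, Finset.mem_filter]
    refine ⟨hi, fun j => ?_⟩
    have := congrFun hf.2 j
    simpa [rblk] using this
  have := card_fiber_eq x N (m * l)
    (Finset.univ.filter (fun u : Fin (m * l) → Bool => rblk m l t u = w)) B hB hmem hmem'
  exact_mod_cast this

/-- shifting a sliding count window. -/
lemma card_window_shift (x : Cantor) (N off l : ℕ) (w : Fin l → Bool) :
    ((Finset.range N).filter (fun i => ∀ j : Fin l, x (i + (off + (j:ℕ))) = w j)).card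
    = ((Finset.Ico off (off + N)).filter (fun i => ∀ j : Fin l, x (i + (j:ℕ)) = w j)).card := by
  classical
  apply Finset.card_nbij' (fun i => i + off) (fun i => i - off)
  · intro a ha
    simp only [Finset.mem_coe, Finset.mem_filter, Finset.mem_range] at ha
    simp only [Finset.mem_coe, Finset.mem_filter, Finset.mem_Ico]
    refine ⟨⟨by omega, by omega⟩, fun j => ?_⟩
    have := ha.2 j
    rw [show a + off + (j:ℕ) = a + (off + (j:ℕ)) by omega]
    exact this
  · intro b hb
    simp only [Finset.mem_coe, Finset.mem_filter, Finset.mem_Ico] at hb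
    simp only [Finset.mem_coe, Finset.mem_filter, Finset.mem_range]
    refine ⟨by omega, fun j => ?_⟩
    have := hb.2 j
    rw [show b - off + (off + (j:ℕ)) = b + (j:ℕ) by omega]
    exact this
  · intro a ha; show a + off - off = a; omega
  · intro b hb
    simp only [Finset.mem_coe, Finset.mem_filter, Finset.mem_Ico] at hb
    show b - off + off = b
    omega

/-- window count comparison: the window `[off, off+N)` vs `[0, N')`. -/
lemma card_window_le (x : Cantor) (N N' off l : ℕ) (hsub : off + N ≤ N') (w : Fin l → Bool) :
    ((Finset.Ico off (off + N)).filter (fun i => ∀ j : Fin l, x (i + (j:ℕ)) = w j)).card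
      ≤ ((Finset.range N').filter (fun i => ∀ j : Fin l, x (i + (j:ℕ)) = w j)).card
    ∧ ((Finset.range N').filter (fun i => ∀ j : Fin l, x (i + (j:ℕ)) = w j)).card
      ≤ ((Finset.Ico off (off + N)).filter (fun i => ∀ j : Fin l, x (i + (j:ℕ)) = w j)).card
        + (N' - N) := by
  classical
  set P := fun i => ∀ j : Fin l, x (i + (j:ℕ)) = w j
  have hIco : Finset.Ico off (off + N) ⊆ Finset.range N' := by
    intro i hi
    simp only [Finset.mem_Ico] at hi
    simp only [Finset.mem_range]
    omega
  constructor
  · exact Finset.card_le_card (Finset.filter_subset_filter _ hIco)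
  · have hsplit : (Finset.range N').filter P
        ⊆ (Finset.Ico off (off + N)).filter P ∪ (Finset.range N' \ Finset.Ico off (off + N)) := by
      intro i hi
      rw [Finset.mem_union]
      by_cases hio : i ∈ Finset.Ico off (off + N)
      · exact Or.inl (Finset.mem_filter.2 ⟨hio, (Finset.mem_filter.1 hi).2⟩)
      · exact Or.inr (Finset.mem_sdiff.2 ⟨(Finset.mem_filter.1 hi).1, hio⟩)
    calc ((Finset.range N').filter P).card
        ≤ ((Finset.Ico off (off + N)).filter P ∪ (Finset.range N' \ Finset.Ico off (off + N))).card :=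
          Finset.card_le_card hsplit
      _ ≤ ((Finset.Ico off (off + N)).filter P).card
          + (Finset.range N' \ Finset.Ico off (off + N)).card := Finset.card_union_le _ _
      _ = ((Finset.Ico off (off + N)).filter P).card + (N' - N) := by
          rw [Finset.card_sdiff_of_subset hIco, Finset.card_range, Nat.card_Ico]
          congr 1
          omega

/-- real ratio comparison. -/
lemma ratio_diff (a b N d : ℕ) (hN : 0 < N) (haN : a ≤ N) (hab : a ≤ b) (hbad : b ≤ a + d) :
    |(a:ℝ)/(N:ℝ) - (b:ℝ)/((N:ℝ)+(d:ℝ))| ≤ (d:ℝ)/((N:ℝ)+(d:ℝ)) := by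
  have hNr : (0:ℝ) < (N:ℝ) := by exact_mod_cast hN
  have hNd : (0:ℝ) < (N:ℝ) + (d:ℝ) := by positivity
  have ha : (0:ℝ) ≤ (a:ℝ) := by positivity
  have habr : (a:ℝ) ≤ (b:ℝ) := by exact_mod_cast hab
  have hbadr : (b:ℝ) ≤ (a:ℝ) + (d:ℝ) := by exact_mod_cast hbad
  have haNr : (a:ℝ) ≤ (N:ℝ) := by exact_mod_cast haN
  rw [abs_le]
  constructor
  · have h1 : (b:ℝ)/((N:ℝ)+(d:ℝ)) ≤ ((a:ℝ)+(d:ℝ))/((N:ℝ)+(d:ℝ)) := by gcongr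
    have h2 : (a:ℝ)/((N:ℝ)+(d:ℝ)) ≤ (a:ℝ)/(N:ℝ) := by gcongr; linarith
    rw [add_div] at h1
    linarith
  · have h1 : (a:ℝ)/((N:ℝ)+(d:ℝ)) ≤ (b:ℝ)/((N:ℝ)+(d:ℝ)) := by gcongr
    have h2 : (a:ℝ)/(N:ℝ) - (a:ℝ)/((N:ℝ)+(d:ℝ)) = ((a:ℝ)*(d:ℝ))/((N:ℝ)*((N:ℝ)+(d:ℝ))) := by
      field_simp
      ring
    have h3 : ((a:ℝ)*(d:ℝ))/((N:ℝ)*((N:ℝ)+(d:ℝ))) ≤ ((N:ℝ)*(d:ℝ))/((N:ℝ)*((N:ℝ)+(d:ℝ))) := by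
      gcongr
    have h4 : ((N:ℝ)*(d:ℝ))/((N:ℝ)*((N:ℝ)+(d:ℝ))) = (d:ℝ)/((N:ℝ)+(d:ℝ)) := by
      rw [mul_div_mul_left _ _ (ne_of_gt hNr)]
    linarith


lemma negMulLog2_nonneg {p : ℝ} (h0 : 0 ≤ p) (h1 : p ≤ 1) : 0 ≤ negMulLog2 p := by
  rw [negMulLog2_eq]
  have := Real.negMulLog_nonneg h0 h1
  have hlog2 : (0:ℝ) < Real.log 2 := Real.log_pos one_lt_two
  positivity

lemma slidingH_nonneg (x : Cantor) (n k : ℕ) : 0 ≤ slidingH x n k := by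
  unfold slidingH
  apply mul_nonneg (by positivity)
  apply Finset.sum_nonneg
  intro w _
  exact negMulLog2_nonneg (slidingP_nonneg x n k w) (slidingP_le_one x n k w)

lemma slidingH_zero_of_le (x : Cantor) (n k : ℕ) (h : n ≤ k) : slidingH x n k = 0 := by
  unfold slidingH
  rw [mul_eq_zero]
  right
  apply Finset.sum_eq_zero
  intro w _
  have h1 : n - k + 1 = 1 := by omega
  have hc : ((Finset.range (n - k + 1)).filter
      (fun i => ∀ j : Fin k, x (i + (j : ℕ)) = w j)).card ≤ 1 := by
    calc ((Finset.range (n - k + 1)).filter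
        (fun i => ∀ j : Fin k, x (i + (j : ℕ)) = w j)).card
        ≤ (Finset.range (n - k + 1)).card := Finset.card_filter_le _ _
      _ = 1 := by rw [Finset.card_range, h1]
  have hP : slidingP x n k w
      = (((Finset.range (n - k + 1)).filter
        (fun i => ∀ j : Fin k, x (i + (j : ℕ)) = w j)).card : ℝ) := by
    unfold slidingP
    rw [h1]
    norm_num
  rcases Nat.le_one_iff_eq_zero_or_eq_one.1 hc with h0 | h0 <;>
    rw [hP, h0] <;> simp [negMulLog2]

end SlidingAux



open SlidingAux in
set_option maxHeartbeats 2000000 in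
/-- H_{ml} ≤ H_l + o(n)/n, error depending only on l and m. -/

theorem sliding_entropy_multiple
    (l m : ℕ) (hl : 0 < l) (hm : 0 < m) :
    ∃ e : ℕ → ℝ, Tendsto e atTop (nhds 0) ∧
      ∀ (x : Cantor) (n : ℕ), slidingH x n (m * l) ≤ slidingH x n l + e n := by
  classical
  set dlt : ℕ → ℝ := fun n => (((m-1)*l : ℕ) : ℝ) / ((n - l + 1 : ℕ) : ℝ) with hdlt
  have hdlt0 : ∀ n, 0 ≤ dlt n := by
    intro n
    rw [hdlt]
    positivity
  have hlog2 : (0:ℝ) < Real.log 2 := Real.log_pos one_lt_two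
  refine ⟨fun n => (2^l : ℝ) * (2 * Real.sqrt (dlt n) + dlt n) / ((l:ℝ) * Real.log 2), ?_, ?_⟩
  · -- the error sequence tends to 0
    have h0 : Tendsto (fun n : ℕ => ((n - l + 1 : ℕ):ℝ)) atTop atTop :=
      tendsto_natCast_atTop_atTop.comp
        (tendsto_atTop_mono (fun n => Nat.le_succ (n - l)) (tendsto_sub_atTop_nat l))
    have hδ : Tendsto dlt atTop (nhds 0) := Tendsto.div_atTop tendsto_const_nhds h0
    have hs : Tendsto (fun n => Real.sqrt (dlt n)) atTop (nhds 0) := by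
      have := (Real.continuous_sqrt.tendsto 0).comp hδ
      simpa [Function.comp_def] using this
    have := (((hs.const_mul 2).add hδ).const_mul ((2:ℝ)^l)).div_const ((l:ℝ) * Real.log 2)
    simpa using this
  · intro x n
    rcases lt_or_ge n (m * l) with hn | hn
    · -- degenerate case: the ml-block entropy is zero
      have h1 : slidingH x n (m*l) = 0 := slidingH_zero_of_le x n (m*l) (le_of_lt hn)
      have h2 : 0 ≤ slidingH x n l := slidingH_nonneg x n l
      have h3 : 0 ≤ (2^l : ℝ) * (2 * Real.sqrt (dlt n) + dlt n) / ((l:ℝ) * Real.log 2) := by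
        have h4 := hdlt0 n
        have h5 := Real.sqrt_nonneg (dlt n)
        positivity
      rw [h1]
      linarith
    · -- main case : n ≥ m*l
      have hml : l ≤ m * l := Nat.le_mul_of_pos_left l hm
      have hdl : (m-1)*l + l = m * l := by
        rw [Nat.sub_one_mul]
        omega
      -- subadditivity
      have hQ0 : ∀ u : Fin (m*l) → Bool, 0 ≤ slidingP x n (m*l) u :=
        fun u => slidingP_nonneg x n (m*l) u
      have hQ1 : ∑ u, slidingP x n (m*l) u = 1 := sum_slidingP x n (m*l)
      have hsub := entropy_subadd_s2 (slidingP x n (m*l)) hQ0 hQ1 m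
        (fun t u => rblk m l t u) (fun u u' h => rblk_inj m l hl u u' h)
      set S := ∑ w : Fin l → Bool, Real.negMulLog (slidingP x n l w) with hS
      -- per-marginal comparison
      have hmargbound : ∀ (t : Fin m) (w : Fin l → Bool),
          Real.negMulLog (∑ u ∈ Finset.univ.filter
              (fun u : Fin (m*l) → Bool => rblk m l t u = w), slidingP x n (m*l) u)
          ≤ Real.negMulLog (slidingP x n l w) + (2 * Real.sqrt (dlt n) + dlt n) := by
        intro t w
        rw [marg_slidingP x n m l t w]
        set a := ((Finset.range (n - m*l + 1)).filter
          (fun i => ∀ j : Fin l, x (i + ((t:ℕ)*l + (j:ℕ))) = w j)).card with ha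
        set b := ((Finset.range (n - l + 1)).filter
          (fun i => ∀ j : Fin l, x (i + (j:ℕ)) = w j)).card with hb
        have hshift := card_window_shift x (n - m*l + 1) ((t:ℕ)*l) l w
        have ht : (t:ℕ) * l ≤ (m-1) * l := Nat.mul_le_mul_right l (by omega)
        have hsub2 : (t:ℕ)*l + (n - m*l + 1) ≤ n - l + 1 := by omega
        have hcmp := card_window_le x (n - m*l + 1) (n - l + 1) ((t:ℕ)*l) l hsub2 w
        have hab : a ≤ b := by rw [ha, hshift]; exact hcmp.1
        have hba : b ≤ a + (m-1)*l := by
          rw [hb, ha, hshift]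
          have := hcmp.2
          have he : (n - l + 1) - (n - m*l + 1) = (m-1)*l := by omega
          rw [he] at this
          exact this
        have haN : a ≤ n - m*l + 1 := by
          rw [ha]
          have := Finset.card_filter_le (Finset.range (n - m*l + 1))
            (fun i => ∀ j : Fin l, x (i + ((t:ℕ)*l + (j:ℕ))) = w j)
          rwa [Finset.card_range] at this
        have hratio := ratio_diff a b (n - m*l + 1) ((m-1)*l) (Nat.succ_pos _) haN hab hba
        have hcast : ((n - m*l + 1 : ℕ):ℝ) + (((m-1)*l : ℕ):ℝ) = ((n - l + 1:ℕ):ℝ) := by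
          rw [← Nat.cast_add]
          congr 1
          omega
        rw [hcast] at hratio
        have hPdef : slidingP x n l w = (b:ℝ)/((n - l + 1:ℕ):ℝ) := rfl
        rw [← hPdef] at hratio
        apply negMulLog_diff_le
        · positivity
        · rw [div_le_one (denom_pos n (m*l))]
          exact_mod_cast haN
        · exact slidingP_nonneg x n l w
        · exact slidingP_le_one x n l w
        · exact hratio
      -- sum the marginal bounds
      have hcardw : (Finset.univ : Finset (Fin l → Bool)).card = 2^l := by
        simp [Fintype.card_fun]
      have hsumw : ∀ t : Fin m,
          ∑ w : Fin l → Bool, Real.negMulLog (∑ u ∈ Finset.univ.filter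
              (fun u : Fin (m*l) → Bool => rblk m l t u = w), slidingP x n (m*l) u)
          ≤ S + (2^l : ℝ) * (2 * Real.sqrt (dlt n) + dlt n) := by
        intro t
        calc ∑ w : Fin l → Bool, Real.negMulLog (∑ u ∈ Finset.univ.filter
                (fun u : Fin (m*l) → Bool => rblk m l t u = w), slidingP x n (m*l) u)
            ≤ ∑ w : Fin l → Bool,
              (Real.negMulLog (slidingP x n l w) + (2 * Real.sqrt (dlt n) + dlt n)) :=
              Finset.sum_le_sum (fun w _ => hmargbound t w)
          _ = S + (2^l : ℝ) * (2 * Real.sqrt (dlt n) + dlt n) := by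
              rw [Finset.sum_add_distrib, Finset.sum_const, hcardw, hS]
              push_cast
              ring
      have htot : ∑ u, Real.negMulLog (slidingP x n (m*l) u)
          ≤ (m:ℝ) * (S + (2^l : ℝ) * (2 * Real.sqrt (dlt n) + dlt n)) := by
        refine le_trans hsub ?_
        calc (∑ t : Fin m, ∑ w : Fin l → Bool, Real.negMulLog (∑ u ∈ Finset.univ.filter
                (fun u : Fin (m*l) → Bool => rblk m l t u = w), slidingP x n (m*l) u))
            ≤ ∑ _t : Fin m, (S + (2^l : ℝ) * (2 * Real.sqrt (dlt n) + dlt n)) :=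
              Finset.sum_le_sum (fun t _ => hsumw t)
          _ = (m:ℝ) * (S + (2^l : ℝ) * (2 * Real.sqrt (dlt n) + dlt n)) := by
              rw [Finset.sum_const, Finset.card_univ, Fintype.card_fin]
              push_cast
              ring
      -- convert to slidingH
      have hHml : slidingH x n (m*l)
          = (∑ u, Real.negMulLog (slidingP x n (m*l) u)) / (((m:ℝ)*(l:ℝ)) * Real.log 2) := by
        unfold slidingH
        rw [Finset.sum_congr rfl (fun u _ => negMulLog2_eq (slidingP x n (m*l) u)),
          ← Finset.sum_div]
        push_cast
        ring
      have hHl : slidingH x n l = S / ((l:ℝ) * Real.log 2) := by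
        unfold slidingH
        rw [Finset.sum_congr rfl (fun w _ => negMulLog2_eq (slidingP x n l w)),
          ← Finset.sum_div, hS]
        ring
      rw [hHml, hHl]
      have hm' : (0:ℝ) < (m:ℝ) := by exact_mod_cast hm
      have hl' : (0:ℝ) < (l:ℝ) := by exact_mod_cast hl
      calc (∑ u, Real.negMulLog (slidingP x n (m*l) u)) / (((m:ℝ)*(l:ℝ)) * Real.log 2)
          ≤ ((m:ℝ) * (S + (2^l : ℝ) * (2 * Real.sqrt (dlt n) + dlt n)))
            / (((m:ℝ)*(l:ℝ)) * Real.log 2) := by gcongr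
        _ = S / ((l:ℝ) * Real.log 2)
            + (2^l : ℝ) * (2 * Real.sqrt (dlt n) + dlt n) / ((l:ℝ) * Real.log 2) := by
            field_simp


end
end

section
/- Let x ∈ {0,1}^∞ with v(x) not a dyadic rational, let ν'_n = (1/n) Σ_{j=0}^{n-1} δ_{2^j v(x) mod 1} on the torus, and let d be a non-zero dyadic rational. If ν'_{n_m} ⇒ μ' weakly along some subsequence ⟨n_m⟩, then μ'({d}) = 0. -/
open MeasureTheory Filter Topology Real
open scoped ENNReal

noncomputable section

namespace DyadicAux

open scoped BoundedContinuousFunction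

abbrev T2 : UnitAddCircle → UnitAddCircle := fun t => t + t

lemma contT2 : Continuous T2 := continuous_id.add continuous_id
lemma measT2 : Measurable T2 := contT2.measurable

lemma integral_empMeasT (r : ℝ) (n : ℕ) (f : UnitAddCircle →ᵇ ℝ) :
    ∫ y, f y ∂(empMeasT r n)
      = (n : ℝ)⁻¹ * ∑ j ∈ Finset.range n, f (((2:ℝ)^j * r : ℝ) : UnitAddCircle) := by
  rw [empMeasT, integral_smul_measure,
    integral_finset_sum_measure (fun i _ => f.integrable _)]
  simp [integral_dirac, smul_eq_mul]

lemma hwR {x : Cantor} {φ : ℕ → ℕ} {μ' : Measure UnitAddCircle}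
    (hw : WeakConv (fun m => empMeasT (eval x) (φ m)) μ')
    (f : UnitAddCircle →ᵇ ℝ) :
    Tendsto (fun m => ∫ y, f y ∂(empMeasT (eval x) (φ m))) atTop (nhds (∫ y, f y ∂μ')) := by
  have lip : LipschitzWith 1 Complex.ofReal := Complex.isometry_ofReal.lipschitz
  have h := hw (f.comp Complex.ofReal lip)
  have key : ∀ ν : Measure UnitAddCircle,
      ∫ y, (f.comp Complex.ofReal lip) y ∂ν = ((∫ y, f y ∂ν : ℝ) : ℂ) := fun ν =>
    integral_ofReal (f := fun y => f y) (μ := ν) (𝕜 := ℂ)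
  simp_rw [key] at h
  have h2 := (Complex.continuous_re.tendsto _).comp h
  simpa [Function.comp_def] using h2

lemma map_invariant {x : Cantor} {μ' : Measure UnitAddCircle} (hμ' : IsProbabilityMeasure μ')
    {φ : ℕ → ℕ} (hφ : StrictMono φ) (hφ0 : ∀ m, 0 < φ m)
    (hw : WeakConv (fun m => empMeasT (eval x) (φ m)) μ') :
    Measure.map T2 μ' = μ' := by
  haveI := hμ'
  haveI : IsProbabilityMeasure (Measure.map T2 μ') :=
    Measure.isProbabilityMeasure_map measT2.aemeasurable
  have hreal : ∀ g : UnitAddCircle →ᵇ ℝ,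
      ∫ y, g y ∂(Measure.map T2 μ') = ∫ y, g y ∂μ' := by
    intro g
    rw [integral_map measT2.aemeasurable g.continuous.measurable.aestronglyMeasurable]
    set gT : UnitAddCircle →ᵇ ℝ := g.compContinuous ⟨T2, contT2⟩ with hgTdef
    have hgT' : ∫ y, g (T2 y) ∂μ' = ∫ y, gT y ∂μ' := rfl
    rw [hgT']
    set G : ℕ → ℝ := fun j => g (((2:ℝ)^j * eval x : ℝ) : UnitAddCircle) with hG
    have h1 := hwR hw gT
    have hsum : ∀ n : ℕ, ∫ y, gT y ∂(empMeasT (eval x) n)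
        = ∫ y, g y ∂(empMeasT (eval x) n) + (n:ℝ)⁻¹ * (G n - G 0) := by
      intro n
      rw [integral_empMeasT, integral_empMeasT]
      have hT : ∀ j : ℕ, gT (((2:ℝ)^j * eval x : ℝ) : UnitAddCircle) = G (j+1) := by
        intro j
        have e : (2:ℝ)^(j+1) * eval x = (2:ℝ)^j * eval x + (2:ℝ)^j * eval x := by ring
        show g ((((2:ℝ)^j * eval x : ℝ) : UnitAddCircle)
          + (((2:ℝ)^j * eval x : ℝ) : UnitAddCircle)) = g (((2:ℝ)^(j+1) * eval x : ℝ) : UnitAddCircle)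
        rw [e, AddCircle.coe_add]
      have tele : ∑ j ∈ Finset.range n, gT (((2:ℝ)^j * eval x : ℝ) : UnitAddCircle)
          = ∑ j ∈ Finset.range n, G j + (G n - G 0) := by
        simp_rw [hT]
        have := Finset.sum_range_succ' G n
        rw [Finset.sum_range_succ] at this
        -- this : ∑_{i<n} G i + G n = ∑_{i<n} G (i+1) + G 0
        linarith [this]
      rw [tele, mul_add]
    have herr : Tendsto (fun m => ((φ m : ℝ))⁻¹ * (G (φ m) - G 0)) atTop (nhds 0) := by
      apply squeeze_zero_norm' (a := fun m : ℕ => (m:ℝ)⁻¹ * (2 * ‖g‖))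
      · filter_upwards [eventually_ge_atTop 1] with m hm
        have hb : |G (φ m) - G 0| ≤ 2 * ‖g‖ := by
          have := g.norm_coe_le_norm (((2:ℝ)^(φ m) * eval x : ℝ) : UnitAddCircle)
          have := g.norm_coe_le_norm (((2:ℝ)^0 * eval x : ℝ) : UnitAddCircle)
          calc |G (φ m) - G 0| ≤ |G (φ m)| + |G 0| := abs_sub _ _
          _ ≤ ‖g‖ + ‖g‖ := by
              apply add_le_add <;>
                simpa [hG, Real.norm_eq_abs] using g.norm_coe_le_norm _
          _ = 2 * ‖g‖ := by ring
        have hφm : (m:ℝ) ≤ (φ m : ℝ) := by exact_mod_cast hφ.le_apply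
        have hmpos : (0:ℝ) < m := by exact_mod_cast hm
        have hinv : ((φ m : ℝ))⁻¹ ≤ (m:ℝ)⁻¹ := by
          apply inv_anti₀ hmpos hφm
        calc ‖((φ m : ℝ))⁻¹ * (G (φ m) - G 0)‖
            = ((φ m : ℝ))⁻¹ * |G (φ m) - G 0| := by
              rw [norm_mul, Real.norm_eq_abs, Real.norm_eq_abs,
                abs_of_nonneg (by positivity)]
        _ ≤ (m:ℝ)⁻¹ * (2 * ‖g‖) := by
              apply mul_le_mul hinv hb (abs_nonneg _)
              positivity
      · simpa using (tendsto_inv_atTop_nhds_zero_nat (𝕜 := ℝ)).mul_const (2 * ‖g‖)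
    have h2 : Tendsto (fun m => ∫ y, gT y ∂(empMeasT (eval x) (φ m))) atTop
        (nhds (∫ y, g y ∂μ')) := by
      have := (hwR hw g).add herr
      rw [add_zero] at this
      simpa only [← hsum] using this
    exact tendsto_nhds_unique h1 h2
  apply ext_of_forall_lintegral_eq_of_IsFiniteMeasure
  intro f
  have lipn : LipschitzWith 1 ((↑) : NNReal → ℝ) := isometry_subtype_coe.lipschitz
  have heq := hreal (f.comp _ lipn)
  have h1 := BoundedContinuousFunction.toReal_lintegral_coe_eq_integral f (Measure.map T2 μ')
  have h2 := BoundedContinuousFunction.toReal_lintegral_coe_eq_integral f μ'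
  have fin1 := (BoundedContinuousFunction.lintegral_lt_top_of_nnreal (Measure.map T2 μ') f).ne
  have fin2 := (BoundedContinuousFunction.lintegral_lt_top_of_nnreal μ' f).ne
  exact (ENNReal.toReal_eq_toReal_iff' fin1 fin2).mp (by rw [h1, h2]; exact heq)

lemma singleton_le (μ' : Measure UnitAddCircle) (hmap : Measure.map T2 μ' = μ')
    (t : UnitAddCircle) : μ' {t} ≤ μ' {t + t} := by
  have h : μ' {t + t} = μ' (T2 ⁻¹' {t + t}) := by
    conv_lhs => rw [← hmap]
    exact Measure.map_apply measT2 (measurableSet_singleton _)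
  rw [h]
  exact measure_mono (Set.singleton_subset_iff.mpr rfl)

lemma half_ne_zero : ((1/2 : ℝ) : UnitAddCircle) ≠ 0 := by
  rw [Ne, AddCircle.coe_eq_zero_iff]
  rintro ⟨n, hn⟩
  have h1 : (n:ℝ) = 1/2 := by simpa using hn
  have h2 : ((2*n : ℤ) : ℝ) = 1 := by push_cast; linarith
  have h3 : (2*n : ℤ) = 1 := by exact_mod_cast h2
  omega

lemma meas_half_zero (μ' : Measure UnitAddCircle) [IsProbabilityMeasure μ']
    (hmap : Measure.map T2 μ' = μ') : μ' {((1/2:ℝ) : UnitAddCircle)} = 0 := by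
  have hpre : μ' (T2 ⁻¹' {(0 : UnitAddCircle)}) = μ' {(0:UnitAddCircle)} := by
    conv_rhs => rw [← hmap]
    exact (Measure.map_apply measT2 (measurableSet_singleton _)).symm
  have hsub : ({(0:UnitAddCircle)} ∪ {((1/2:ℝ) : UnitAddCircle)} : Set UnitAddCircle)
      ⊆ T2 ⁻¹' {0} := by
    intro s hs
    rcases hs with hs | hs <;> simp only [Set.mem_singleton_iff] at hs <;> subst hs
    · show (0:UnitAddCircle) + 0 = 0; simp
    · show ((1/2:ℝ):UnitAddCircle) + ((1/2:ℝ):UnitAddCircle) = 0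
      rw [← AddCircle.coe_add]
      norm_num
  have hdisj : Disjoint ({(0:UnitAddCircle)} : Set UnitAddCircle)
      {((1/2:ℝ):UnitAddCircle)} := by
    rw [Set.disjoint_singleton]
    exact fun h => half_ne_zero h.symm
  have hadd : μ' {(0:UnitAddCircle)} + μ' {((1/2:ℝ):UnitAddCircle)}
      ≤ μ' {(0:UnitAddCircle)} := by
    calc μ' {(0:UnitAddCircle)} + μ' {((1/2:ℝ):UnitAddCircle)}
        = μ' ({(0:UnitAddCircle)} ∪ {((1/2:ℝ):UnitAddCircle)}) :=
          (measure_union hdisj (measurableSet_singleton _)).symm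
    _ ≤ μ' (T2 ⁻¹' {0}) := measure_mono hsub
    _ = μ' {(0:UnitAddCircle)} := hpre
  have hfin : μ' {(0:UnitAddCircle)} ≠ ⊤ := measure_ne_top μ' _
  have hle : μ' {((1/2:ℝ):UnitAddCircle)} ≤ 0 := by
    have h' : μ' {(0:UnitAddCircle)} + μ' {((1/2:ℝ):UnitAddCircle)}
        ≤ μ' {(0:UnitAddCircle)} + 0 := by simpa using hadd
    exact (ENNReal.add_le_add_iff_left hfin).mp h'
  exact le_antisymm hle zero_le

lemma dyadic_zero (μ' : Measure UnitAddCircle) [IsProbabilityMeasure μ']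
    (hmap : Measure.map T2 μ' = μ') :
    ∀ (n : ℕ) (t : ℝ), (∃ a : ℤ, t * 2^n = a) → (t : UnitAddCircle) ≠ 0 →
      μ' {(t : UnitAddCircle)} = 0 := by
  intro n
  induction n with
  | zero =>
    rintro t ⟨a, ha⟩ ht
    exact absurd ((AddCircle.coe_eq_zero_iff _).mpr ⟨a, by simp at ha; simp [ha]⟩) ht
  | succ n ih =>
    rintro t ⟨a, ha⟩ ht
    have h2 : (2*t) * 2^n = (a:ℝ) := by rw [← ha]; ring
    by_cases h0 : ((2*t : ℝ) : UnitAddCircle) = 0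
    · have hhalf : (t : UnitAddCircle) = ((1/2:ℝ) : UnitAddCircle) := by
        rw [AddCircle.coe_eq_zero_iff] at h0
        rcases h0 with ⟨m, hm⟩
        have hm' : (m:ℝ) = 2*t := by simpa using hm
        rcases Int.even_or_odd m with ⟨k, hk⟩ | ⟨k, hk⟩
        · exfalso
          apply ht
          rw [AddCircle.coe_eq_zero_iff]
          refine ⟨k, ?_⟩
          have : (k:ℝ) = t := by
            rw [hk] at hm'; push_cast at hm'; linarith
          simpa using this
        · have hsub : ((t - 1/2 : ℝ) : UnitAddCircle) = 0 := by
            rw [AddCircle.coe_eq_zero_iff]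
            refine ⟨k, ?_⟩
            have : (k:ℝ) = t - 1/2 := by
              rw [hk] at hm'; push_cast at hm'; linarith
            simpa using this
          have hsub' : ((t:ℝ) : UnitAddCircle) - ((1/2:ℝ) : UnitAddCircle) = 0 := by
            rw [← AddCircle.coe_sub]; exact hsub
          exact sub_eq_zero.mp hsub'
      rw [hhalf]
      exact meas_half_zero μ' hmap
    · have h2t := ih (2*t) ⟨a, h2⟩ h0
      have hco : (t : UnitAddCircle) + (t : UnitAddCircle) = ((2*t : ℝ) : UnitAddCircle) := by
        have e : t + t = 2*t := by ring
        rw [← AddCircle.coe_add, e]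
      have hle := singleton_le μ' hmap (t : UnitAddCircle)
      rw [hco, h2t] at hle
      exact le_antisymm hle zero_le

end DyadicAux

/-- subsequence weak limits give zero mass to non-zero dyadic rationals. -/
theorem limit_measure_vanishes_at_nonzero_dyadic
    (x : Cantor) (hx : ¬ IsDyadic (eval x))
    (d : ℝ) (hd : IsDyadic d) (hd0 : (d : UnitAddCircle) ≠ 0)
    (μ' : Measure UnitAddCircle) (hμ' : IsProbabilityMeasure μ')
    (φ : ℕ → ℕ) (hφ : StrictMono φ) (hφ0 : ∀ m, 0 < φ m)
    (hw : WeakConv (fun m => empMeasT (eval x) (φ m)) μ') :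
    μ' {(d : UnitAddCircle)} = 0 := by
  haveI := hμ'
  obtain ⟨a, n, hda⟩ := hd
  have hmap := DyadicAux.map_invariant hμ' hφ hφ0 hw
  exact DyadicAux.dyadic_zero μ' hmap n d ⟨a, by rw [hda]; field_simp⟩ hd0

end
end

section
/- With W_x the set of weak subsequence limits of the empirical shift measures of x ∈ {0,1}^∞, the finite-state dimension satisfies dim_FS(x) = inf_{μ ∈ W_x} inf_l H_l(μ)/l, i.e., the limit inferior in the lower average entropy can be replaced by an infimum over block lengths. -/
open MeasureTheory Filter Topology Real
open scoped ENNReal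

noncomputable section

namespace Dim12

lemma negMulLog2_eq (p : ℝ) : negMulLog2 p = Real.negMulLog p * (Real.log 2)⁻¹ := by
  simp [negMulLog2, Real.negMulLog, Real.logb]; ring

lemma continuous_negMulLog2 : Continuous negMulLog2 := by
  simp only [funext negMulLog2_eq]
  exact Real.continuous_negMulLog.mul continuous_const

lemma negMulLog2_nonneg {p : ℝ} (h0 : 0 ≤ p) (h1 : p ≤ 1) : 0 ≤ negMulLog2 p := by
  rw [negMulLog2_eq]
  exact mul_nonneg (Real.negMulLog_nonneg h0 h1) (by positivity)

lemma negMulLog2_le_two {p : ℝ} (h0 : 0 ≤ p) (h1 : p ≤ 1) : negMulLog2 p ≤ 2 := by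
  rcases eq_or_lt_of_le h0 with h | h
  · simp [negMulLog2, ← h]
  · rw [negMulLog2_eq, Real.negMulLog]
    have hlog : Real.log p⁻¹ ≤ p⁻¹ - 1 := Real.log_le_sub_one_of_pos (by positivity)
    have : -p * Real.log p = p * Real.log p⁻¹ := by rw [Real.log_inv]; ring
    rw [this]
    have h2 : p * Real.log p⁻¹ ≤ 1 - p := by
      calc p * Real.log p⁻¹ ≤ p * (p⁻¹ - 1) := by
            apply mul_le_mul_of_nonneg_left hlog h0
        _ = 1 - p := by field_simp
    have hl2 : (0.6931:ℝ) ≤ Real.log 2 := by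
      have := Real.log_two_gt_d9; linarith
    calc p * Real.log p⁻¹ * (Real.log 2)⁻¹ ≤ 1 * (Real.log 2)⁻¹ := by
          apply mul_le_mul_of_nonneg_right (by linarith) (by positivity)
      _ ≤ 2 := by
          rw [one_mul]
          rw [inv_le_comm₀ (by linarith) (by norm_num)]
          linarith

/-- count of occurrences of `w` at starts `i < n`. -/
def cnt (x : Cantor) (n l : ℕ) (w : Fin l → Bool) : ℕ :=
  ((Finset.range n).filter (fun i => ∀ j : Fin l, x (i + (j : ℕ)) = w j)).card

/-- empirical probability with denominator `n`. -/
noncomputable def eP (x : Cantor) (n l : ℕ) (w : Fin l → Bool) : ℝ :=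
  (cnt x n l w : ℝ) / n

lemma eP_nonneg (x n l w) : 0 ≤ eP x n l w :=
  div_nonneg (Nat.cast_nonneg _) (Nat.cast_nonneg _)

lemma cnt_le (x n l w) : cnt x n l w ≤ n := by
  simpa [cnt] using Finset.card_filter_le (Finset.range n) _

lemma eP_le_one (x n l w) : eP x n l w ≤ 1 := by
  rcases Nat.eq_zero_or_pos n with h | h
  · simp [eP, h]
  · rw [eP, div_le_one (by exact_mod_cast h)]
    exact_mod_cast cnt_le x n l w

lemma eP_zero (x : Cantor) {n : ℕ} (hn : n ≠ 0) (w : Fin 0 → Bool) : eP x n 0 w = 1 := by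
  have : cnt x n 0 w = n := by
    simp [cnt, Finset.filter_true_of_mem]
  rw [eP, this, div_self (by exact_mod_cast hn)]

lemma cnt_add (x n l w) :
    cnt x n l w = cnt x n (l+1) (Fin.snoc w false) + cnt x n (l+1) (Fin.snoc w true) := by
  classical
  rw [cnt, cnt, cnt, ← Finset.card_union_of_disjoint, ← Finset.filter_or]
  · congr 1
    apply Finset.filter_congr
    intro i _
    constructor
    · intro h
      cases hb : x (i + l)
      · left; intro j
        rcases Fin.eq_castSucc_or_eq_last j with ⟨j', rfl⟩ | rfl
        · simpa [Fin.snoc] using h j'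
        · simpa [Fin.snoc] using hb
      · right; intro j
        rcases Fin.eq_castSucc_or_eq_last j with ⟨j', rfl⟩ | rfl
        · simpa [Fin.snoc] using h j'
        · simpa [Fin.snoc] using hb
    · rintro (h | h) j
      · simpa [Fin.snoc] using h j.castSucc
      · simpa [Fin.snoc] using h j.castSucc
  · rw [Finset.disjoint_filter]
    intro i _ h1 h2
    have e1 := h1 (Fin.last l)
    have e2 := h2 (Fin.last l)
    simp [Fin.snoc] at e1 e2
    rw [e1] at e2; exact Bool.false_ne_true e2

lemma eP_add (x n l w) :
    eP x n l w = eP x n (l+1) (Fin.snoc w false) + eP x n (l+1) (Fin.snoc w true) := by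
  rw [eP, eP, eP, cnt_add, ← add_div]
  norm_num

lemma measurableSet_cyl (l : ℕ) (w : Fin l → Bool) : MeasurableSet (Cyl l w) := by
  have : Cyl l w = ⋂ j : Fin l, (fun y : Cantor => y (j : ℕ)) ⁻¹' {w j} := by
    ext y; simp [Cyl]
  rw [this]
  exact MeasurableSet.iInter fun j => (measurable_pi_apply _) (measurableSet_singleton _)

lemma isClopen_cyl (l : ℕ) (w : Fin l → Bool) : IsClopen (Cyl l w) := by
  have : Cyl l w = ⋂ j : Fin l, (fun y : Cantor => y (j : ℕ)) ⁻¹' {w j} := by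
    ext y; simp [Cyl]
  rw [this]
  refine ⟨isClosed_iInter fun j => ?_, isOpen_iInter_of_finite fun j => ?_⟩
  · exact IsClosed.preimage (continuous_apply _) (isClosed_discrete _)
  · exact IsOpen.preimage (continuous_apply _) (isOpen_discrete _)

lemma shiftk_mem_cyl {x : Cantor} {i l : ℕ} {w : Fin l → Bool} :
    shiftk x i ∈ Cyl l w ↔ ∀ j : Fin l, x (i + (j : ℕ)) = w j := by
  simp [Cyl, shiftk, Nat.add_comm]

lemma empMeas_cyl (x : Cantor) (n l : ℕ) (w : Fin l → Bool) :
    empMeas x n (Cyl l w) = (n : ℝ≥0∞)⁻¹ * (cnt x n l w : ℝ≥0∞) := by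
  classical
  rw [empMeas]
  simp only [Measure.smul_apply, Measure.coe_finset_sum, Finset.sum_apply, smul_eq_mul]
  congr 1
  rw [cnt]
  rw [Finset.card_filter]
  push_cast
  apply Finset.sum_congr rfl
  intro i _
  rw [Measure.dirac_apply' _ (measurableSet_cyl l w)]
  by_cases hc : ∀ j : Fin l, x (i + (j : ℕ)) = w j
  · simp [hc, Set.indicator_of_mem (shiftk_mem_cyl.mpr hc)]
  · simp [hc, Set.indicator_of_notMem (fun h => hc (shiftk_mem_cyl.mp h))]

lemma empMeas_cyl_toReal (x : Cantor) (n l : ℕ) (w : Fin l → Bool) :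
    (empMeas x n (Cyl l w)).toReal = eP x n l w := by
  rcases Nat.eq_zero_or_pos n with h | h
  · simp [empMeas_cyl, h, eP]
  · rw [empMeas_cyl, ENNReal.toReal_mul, eP]
    rw [ENNReal.toReal_inv]
    simp [div_eq_inv_mul]

lemma empMeas_prob (x : Cantor) {n : ℕ} (hn : n ≠ 0) : IsProbabilityMeasure (empMeas x n) := by
  constructor
  rw [empMeas]
  simp only [Measure.smul_apply, Measure.coe_finset_sum, Finset.sum_apply, smul_eq_mul]
  simp [Measure.dirac_apply' _ MeasurableSet.univ]
  rw [ENNReal.inv_mul_cancel (by exact_mod_cast hn) (by simp)]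

end Dim12
namespace Dim12

/-- sliding count. -/
def scnt (x : Cantor) (n l : ℕ) (w : Fin l → Bool) : ℕ :=
  ((Finset.range (n - l + 1)).filter (fun i => ∀ j : Fin l, x (i + (j : ℕ)) = w j)).card

lemma slidingP_eq (x n l w) : slidingP x n l w = (scnt x n l w : ℝ) / ((n - l + 1 : ℕ) : ℝ) := rfl

lemma scnt_le (x n l w) : scnt x n l w ≤ n - l + 1 := by
  simpa [scnt] using Finset.card_filter_le (Finset.range (n - l + 1)) _

lemma slidingP_nonneg (x n l w) : 0 ≤ slidingP x n l w :=
  div_nonneg (Nat.cast_nonneg _) (Nat.cast_nonneg _)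

lemma slidingP_le_one (x n l w) : slidingP x n l w ≤ 1 := by
  rw [slidingP_eq, div_le_one (by positivity)]
  exact_mod_cast scnt_le x n l w

lemma scnt_le_cnt (x n l w) (hl : 1 ≤ l) (hn : l ≤ n) : scnt x n l w ≤ cnt x n l w := by
  apply Finset.card_le_card
  refine Finset.filter_subset_filter _ (Finset.range_subset_range.mpr ?_)
  omega

lemma cnt_le_scnt_add (x n l w) : cnt x n l w ≤ scnt x n l w + (n - (n - l + 1)) := by
  have h : Finset.range n ⊆ Finset.range (n - l + 1) ∪ Finset.Ico (n - l + 1) n := by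
    intro i hi
    simp only [Finset.mem_union, Finset.mem_range, Finset.mem_Ico] at *
    omega
  calc cnt x n l w ≤ ((Finset.range (n - l + 1) ∪ Finset.Ico (n - l + 1) n).filter
        (fun i => ∀ j : Fin l, x (i + (j : ℕ)) = w j)).card := by
        apply Finset.card_le_card; exact Finset.filter_subset_filter _ h
    _ ≤ _ := by
        rw [Finset.filter_union]
        refine (Finset.card_union_le _ _).trans ?_
        gcongr
        · exact le_rfl
        · exact le_trans (Finset.card_filter_le _ _) (by simp)

lemma real_aux {S C N n l : ℝ} (hN : 0 < N) (hNn : N ≤ n) (hS0 : 0 ≤ S) (hSN : S ≤ N)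
    (hSC : S ≤ C) (hCS : C ≤ S + l) (hnN : n - N ≤ l) (hl : 0 ≤ l) :
    |S / N - C / n| ≤ l / n := by
  have hn : (0:ℝ) < n := lt_of_lt_of_le hN hNn
  rw [abs_le]
  have h2 : S / n ≤ S / N := by gcongr
  have h2' : S / n ≤ C / n := by gcongr
  constructor
  · have h1 : C / n ≤ S / n + l / n := by rw [← add_div]; gcongr
    linarith
  · have key : S / N - S / n ≤ l / n := by
      rw [div_sub_div _ _ (ne_of_gt hN) (ne_of_gt hn), div_le_div_iff₀ (by positivity) hn]
      have e1 : S * (n - N) ≤ N * l := by nlinarith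
      nlinarith [mul_le_mul_of_nonneg_right e1 hn.le]
    linarith

lemma abs_slidingP_sub_eP {x : Cantor} {n l : ℕ} (hn : l ≤ n) (hn1 : 1 ≤ n) (w : Fin l → Bool) :
    |slidingP x n l w - eP x n l w| ≤ l / n := by
  rcases Nat.eq_zero_or_pos l with hl0 | hl1
  · subst hl0
    have h1 : slidingP x n 0 w = 1 := by
      rw [slidingP_eq]
      have : scnt x n 0 w = n - 0 + 1 := by
        simp [scnt, Finset.filter_true_of_mem]
      rw [this]
      exact div_self (by positivity)
    have h2 : eP x n 0 w = 1 := eP_zero x (by omega) w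
    simp [h1, h2]
    try positivity
  rw [slidingP_eq, eP]
  have hgap : n - (n - l + 1) ≤ l := by omega
  apply real_aux
  · positivity
  · exact Nat.cast_le.mpr (by omega)
  · exact Nat.cast_nonneg _
  · exact_mod_cast scnt_le x n l w
  · exact_mod_cast scnt_le_cnt x n l w hl1 hn
  · have h1 : (cnt x n l w : ℝ) ≤ (scnt x n l w : ℝ) + ((n - (n - l + 1) : ℕ) : ℝ) := by
      exact_mod_cast cnt_le_scnt_add x n l w
    have h2 : ((n - (n - l + 1) : ℕ) : ℝ) ≤ (l : ℝ) := by exact_mod_cast hgap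
    linarith
  · have hcast : ((n - l + 1 : ℕ) : ℝ) = (n:ℝ) - l + 1 := by
      push_cast [Nat.cast_sub hn]
      ring
    rw [hcast]
    have h0l : (0:ℝ) ≤ l := Nat.cast_nonneg _
    linarith
  · exact Nat.cast_nonneg _

lemma tendsto_slidingP_sub_eP (x : Cantor) (l : ℕ) (w : Fin l → Bool) :
    Tendsto (fun n => slidingP x n l w - eP x n l w) atTop (𝓝 0) := by
  refine squeeze_zero_norm' ?_ (tendsto_const_div_atTop_nhds_zero_nat (l:ℝ))
  filter_upwards [eventually_ge_atTop (max l 1)] with n hn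
  exact abs_slidingP_sub_eP (le_trans (le_max_left _ _) hn) (le_trans (le_max_right _ _) hn) w

lemma tendsto_slidingP_of_eP {x : Cantor} {φ : ℕ → ℕ} (hφ : StrictMono φ) {l : ℕ}
    {w : Fin l → Bool} {q : ℝ} (h : Tendsto (fun m => eP x (φ m) l w) atTop (𝓝 q)) :
    Tendsto (fun m => slidingP x (φ m) l w) atTop (𝓝 q) := by
  have h0 : Tendsto (fun m => slidingP x (φ m) l w - eP x (φ m) l w) atTop (𝓝 0) :=
    (tendsto_slidingP_sub_eP x l w).comp hφ.tendsto_atTop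
  have := h0.add h
  simpa using this

lemma measH_div_eq (μ : Measure Cantor) (l : ℕ) :
    measH μ l / l = (1 / (l:ℝ)) * ∑ w : Fin l → Bool, negMulLog2 ((μ (Cyl l w)).toReal) := by
  rw [measH]; ring

lemma tendsto_slidingH {x : Cantor} {φ : ℕ → ℕ} {l : ℕ} {μ : Measure Cantor}
    (h : ∀ w : Fin l → Bool,
      Tendsto (fun m => slidingP x (φ m) l w) atTop (𝓝 ((μ (Cyl l w)).toReal))) :
    Tendsto (fun m => slidingH x (φ m) l) atTop (𝓝 (measH μ l / l)) := by
  rw [measH_div_eq]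
  unfold slidingH
  apply Tendsto.const_mul
  apply tendsto_finset_sum
  intro w _
  exact (continuous_negMulLog2.tendsto _).comp (h w)

lemma slidingH_nonneg (x n l) : 0 ≤ slidingH x n l := by
  unfold slidingH
  apply mul_nonneg (by positivity)
  apply Finset.sum_nonneg
  intro w _
  exact negMulLog2_nonneg (slidingP_nonneg x n l w) (slidingP_le_one x n l w)

lemma slidingH_le (x n l) : slidingH x n l ≤ 2 ^ l * 2 := by
  unfold slidingH
  rcases Nat.eq_zero_or_pos l with h | h
  · subst h; simp
  calc (1 / (l:ℝ)) * ∑ w : Fin l → Bool, negMulLog2 (slidingP x n l w)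
      ≤ 1 * ∑ w : Fin l → Bool, negMulLog2 (slidingP x n l w) := by
        apply mul_le_mul_of_nonneg_right
        · rw [div_le_one (by exact_mod_cast h)]; exact_mod_cast h
        · apply Finset.sum_nonneg
          intro w _
          exact negMulLog2_nonneg (slidingP_nonneg x n l w) (slidingP_le_one x n l w)
    _ ≤ ∑ _w : Fin l → Bool, (2:ℝ) := by
        rw [one_mul]
        apply Finset.sum_le_sum
        intro w _
        exact negMulLog2_le_two (slidingP_nonneg x n l w) (slidingP_le_one x n l w)
    _ = 2 ^ l * 2 := by
        rw [Finset.sum_const]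
        simp [Finset.card_univ]

lemma slidingH_boundedUnder_ge (x l) :
    IsBoundedUnder (· ≥ ·) atTop (fun n => slidingH x n l) :=
  isBoundedUnder_of ⟨0, fun n => slidingH_nonneg x n l⟩

lemma slidingH_boundedUnder_le (x l) :
    IsBoundedUnder (· ≤ ·) atTop (fun n => slidingH x n l) :=
  isBoundedUnder_of ⟨2 ^ l * 2, fun n => slidingH_le x n l⟩

lemma liminf_slidingH_nonneg (x l) : 0 ≤ Filter.liminf (fun n => slidingH x n l) atTop := by
  refine le_liminf_of_le ((slidingH_boundedUnder_le x l).isCoboundedUnder_ge) ?_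
  filter_upwards with n using slidingH_nonneg x n l

lemma liminf_le_of_subseq {u : ℕ → ℝ} {φ : ℕ → ℕ} (hφ : StrictMono φ) {L : ℝ}
    (hbd : IsBoundedUnder (· ≥ ·) atTop u)
    (h : Tendsto (u ∘ φ) atTop (𝓝 L)) :
    Filter.liminf u atTop ≤ L := by
  have hmap : Filter.map φ atTop ≤ atTop := hφ.tendsto_atTop
  have h1 : Filter.liminf u atTop ≤ Filter.liminf u (Filter.map φ atTop) :=
    liminf_le_liminf_of_le hmap hbd h.isCoboundedUnder_ge
  rw [← Filter.liminf_comp] at h1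
  rwa [h.liminf_eq] at h1

lemma exists_subseq_tendsto_liminf {u : ℕ → ℝ}
    (hbl : IsBoundedUnder (· ≥ ·) atTop u) (hbu : IsBoundedUnder (· ≤ ·) atTop u) :
    ∃ φ : ℕ → ℕ, StrictMono φ ∧ (∀ m, 0 < φ m) ∧
      Tendsto (u ∘ φ) atTop (𝓝 (Filter.liminf u atTop)) := by
  set L := Filter.liminf u atTop with hL
  have hfreq : ∀ k : ℕ, ∃ᶠ n in atTop, (|u n - L| < 1 / (k+1) ∧ 0 < n) := by
    intro k
    have hε : (0:ℝ) < 1 / (k+1) := by positivity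
    have h1 : ∃ᶠ n in atTop, u n < L + 1 / (k+1) := by
      apply frequently_lt_of_liminf_lt hbu.isCoboundedUnder_ge
      linarith
    have h2 : ∀ᶠ n in atTop, L - 1 / (k+1) < u n := by
      apply eventually_lt_of_lt_liminf _ hbl
      linarith
    have h3 : ∀ᶠ n : ℕ in atTop, 0 < n := eventually_gt_atTop 0
    apply (h1.and_eventually (h2.and h3)).mono
    rintro n ⟨ha, hb, hc⟩
    exact ⟨abs_sub_lt_iff.mpr ⟨by linarith, by linarith⟩, hc⟩
  obtain ⟨φ, hφ, hP⟩ := extraction_forall_of_frequently hfreq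
  refine ⟨φ, hφ, fun m => (hP m).2, ?_⟩
  rw [Metric.tendsto_atTop]
  intro ε hε
  obtain ⟨k, hk⟩ := exists_nat_one_div_lt hε
  refine ⟨k, fun m hm => ?_⟩
  have h1 := (hP m).1
  have h2 : (1:ℝ) / (m+1) ≤ 1 / (k+1) := by
    apply one_div_le_one_div_of_le (by positivity)
    have : (k:ℝ) ≤ (m:ℝ) := by exact_mod_cast hm
    linarith
  rw [Real.dist_eq]
  calc |u (φ m) - L| < 1 / (m+1) := h1
    _ ≤ 1 / (k+1) := h2
    _ < ε := hk

end Dim12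
namespace Dim12

/-- extension of a finite word by `false`s. -/
def extw (l : ℕ) (w : Fin l → Bool) : Cantor := fun i => if h : i < l then w ⟨i, h⟩ else false

lemma mem_cyl_iff {y : Cantor} {l : ℕ} {w : Fin l → Bool} :
    y ∈ Cyl l w ↔ (fun j : Fin l => y (j : ℕ)) = w := by
  simp [Cyl, funext_iff]

lemma isOpen_agree (l : ℕ) (y : Cantor) : IsOpen {z : Cantor | ∀ i < l, z i = y i} := by
  have : {z : Cantor | ∀ i < l, z i = y i}
      = ⋂ i : Fin l, (fun z : Cantor => z (i : ℕ)) ⁻¹' {y (i : ℕ)} := by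
    ext z
    simp only [Set.mem_setOf_eq, Set.mem_iInter, Set.mem_preimage, Set.mem_singleton_iff]
    exact ⟨fun h i => h i i.isLt, fun h i hi => h ⟨i, hi⟩⟩
  rw [this]
  exact isOpen_iInter_of_finite fun i => (continuous_apply _).isOpen_preimage _ (isOpen_discrete _)

lemma exists_cyl_subset {U : Set Cantor} {y : Cantor} (hU : IsOpen U) (hy : y ∈ U) :
    ∃ l : ℕ, {z : Cantor | ∀ i < l, z i = y i} ⊆ U := by
  obtain ⟨I, u, hIu, hsub⟩ := isOpen_pi_iff.mp hU y hy
  refine ⟨I.sup id + 1, fun z hz => hsub ?_⟩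
  intro i hi
  have hle : i ≤ I.sup id := Finset.le_sup (f := id) hi
  rw [hz i (by omega)]
  exact (hIu i hi).2

lemma unif_cyl (f : Cantor → ℂ) (hf : Continuous f) {ε : ℝ} (hε : 0 < ε) :
    ∃ l : ℕ, ∀ y z : Cantor, (∀ i < l, y i = z i) → dist (f y) (f z) ≤ ε := by
  have H : ∀ y : Cantor, ∃ l : ℕ,
      {z : Cantor | ∀ i < l, z i = y i} ⊆ f ⁻¹' Metric.ball (f y) (ε/2) := by
    intro y
    apply exists_cyl_subset (hf.isOpen_preimage _ Metric.isOpen_ball)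
    simp [Metric.mem_ball, hε, half_pos]
  choose L hL using H
  obtain ⟨t, ht⟩ := isCompact_univ.elim_finite_subcover
    (fun y : Cantor => {z : Cantor | ∀ i < L y, z i = y i})
    (fun y => isOpen_agree _ _)
    (fun y _ => Set.mem_iUnion.mpr ⟨y, fun i _ => rfl⟩)
  refine ⟨t.sup L, fun y z hyz => ?_⟩
  obtain ⟨y₀, hy₀t, hy₀⟩ := Set.mem_iUnion₂.mp (ht (Set.mem_univ y))
  have hzy₀ : z ∈ {w : Cantor | ∀ i < L y₀, w i = y₀ i} := by
    intro i hi
    rw [← (hyz i (lt_of_lt_of_le hi (Finset.le_sup hy₀t)))]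
    exact hy₀ i hi
  have h1 : dist (f y) (f y₀) < ε/2 := by
    have := hL y₀ hy₀; simpa [Metric.mem_ball, dist_comm] using this
  have h2 : dist (f z) (f y₀) < ε/2 := by
    have := hL y₀ hzy₀; simpa [Metric.mem_ball, dist_comm] using this
  calc dist (f y) (f z) ≤ dist (f y) (f y₀) + dist (f y₀) (f z) := dist_triangle _ _ _
    _ ≤ ε := by rw [dist_comm (f y₀)]; linarith

lemma extw_agree (l : ℕ) (y : Cantor) : ∀ i < l, y i = extw l (fun j : Fin l => y (j : ℕ)) i := by
  intro i hi
  simp [extw, hi]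

lemma sum_indicator_eq (l : ℕ) (f : Cantor → ℂ) (y : Cantor) :
    (∑ w : Fin l → Bool, Set.indicator (Cyl l w) (fun _ => f (extw l w)) y)
      = f (extw l (fun j : Fin l => y (j : ℕ))) := by
  classical
  rw [Finset.sum_eq_single (fun j : Fin l => y (j : ℕ))]
  · exact Set.indicator_of_mem (mem_cyl_iff.mpr rfl) _
  · intro w _ hw
    exact Set.indicator_of_notMem (fun hmem => hw (mem_cyl_iff.mp hmem).symm) _
  · intro h
    exact absurd (Finset.mem_univ _) h

lemma integral_cyl_approx (ρ : Measure Cantor) [IsProbabilityMeasure ρ] (l : ℕ) (f : Cantor → ℂ) :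
    ∫ y, f (extw l (fun j : Fin l => y (j : ℕ))) ∂ρ
      = ∑ w : Fin l → Bool, ((ρ (Cyl l w)).toReal : ℂ) * f (extw l w) := by
  have hint : ∀ w : Fin l → Bool,
      Integrable (Set.indicator (Cyl l w) (fun _ => f (extw l w))) ρ :=
    fun w => (integrable_const _).indicator (measurableSet_cyl l w)
  have : (fun y => f (extw l (fun j : Fin l => y (j : ℕ))))
      = fun y => ∑ w : Fin l → Bool, Set.indicator (Cyl l w) (fun _ => f (extw l w)) y := by
    funext y
    rw [sum_indicator_eq]
  rw [this, integral_finset_sum _ (fun w _ => hint w)]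
  apply Finset.sum_congr rfl
  intro w _
  rw [integral_indicator_const _ (measurableSet_cyl l w), Complex.real_smul]
  rfl

lemma integrable_cyl_approx (ρ : Measure Cantor) [IsProbabilityMeasure ρ] (l : ℕ) (f : Cantor → ℂ) :
    Integrable (fun y => f (extw l (fun j : Fin l => y (j : ℕ)))) ρ := by
  have : (fun y => f (extw l (fun j : Fin l => y (j : ℕ))))
      = fun y => ∑ w : Fin l → Bool, Set.indicator (Cyl l w) (fun _ => f (extw l w)) y := by
    funext y; rw [sum_indicator_eq]
  rw [this]
  exact integrable_finset_sum _ fun w _ => (integrable_const _).indicator (measurableSet_cyl l w)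

lemma dist_integral_approx (ρ : Measure Cantor) [IsProbabilityMeasure ρ]
    (f : BoundedContinuousFunction Cantor ℂ) {ε : ℝ} (hε : 0 < ε) {l : ℕ}
    (hl : ∀ y z : Cantor, (∀ i < l, y i = z i) → dist (f y) (f z) ≤ ε) :
    dist (∫ y, f y ∂ρ) (∑ w : Fin l → Bool, ((ρ (Cyl l w)).toReal : ℂ) * f (extw l w)) ≤ ε := by
  rw [← integral_cyl_approx ρ l f]
  have hif : Integrable (fun y => f y) ρ := f.integrable ρ
  have hig := integrable_cyl_approx ρ l f
  rw [dist_eq_norm, ← integral_sub hif hig]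
  calc ‖∫ y, (f y - f (extw l (fun j : Fin l => y (j : ℕ)))) ∂ρ‖
      ≤ ∫ y, ‖f y - f (extw l (fun j : Fin l => y (j : ℕ)))‖ ∂ρ :=
        norm_integral_le_integral_norm _
    _ ≤ ∫ _y, ε ∂ρ := by
        apply integral_mono (hif.sub hig).norm (integrable_const _)
        intro y
        simp only [Pi.sub_apply]
        rw [← dist_eq_norm]
        exact hl y _ (extw_agree l y)
    _ = ε := by simp
lemma weakConv_of_cylinders {ν : ℕ → Measure Cantor} {μ : Measure Cantor}
    (hν : ∀ m, IsProbabilityMeasure (ν m)) (hμ : IsProbabilityMeasure μ)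
    (h : ∀ (l : ℕ) (w : Fin l → Bool),
      Tendsto (fun m => ((ν m) (Cyl l w)).toReal) atTop (𝓝 ((μ (Cyl l w)).toReal))) :
    WeakConv ν μ := by
  intro f
  rw [Metric.tendsto_atTop]
  intro ε hε
  have hε4 : 0 < ε/4 := by linarith
  obtain ⟨l, hl⟩ := unif_cyl f f.continuous hε4
  have hsum : Tendsto
      (fun m => ∑ w : Fin l → Bool, (((ν m) (Cyl l w)).toReal : ℂ) * f (extw l w)) atTop
      (𝓝 (∑ w : Fin l → Bool, ((μ (Cyl l w)).toReal : ℂ) * f (extw l w))) := by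
    apply tendsto_finset_sum
    intro w _
    exact ((Complex.continuous_ofReal.tendsto _).comp (h l w)).mul_const _
  rw [Metric.tendsto_atTop] at hsum
  obtain ⟨N, hN⟩ := hsum (ε/4) hε4
  refine ⟨N, fun m hm => ?_⟩
  have hd1 := @dist_integral_approx (ν m) (hν m) f _ hε4 l hl
  have hd2 := @dist_integral_approx μ hμ f _ hε4 l hl
  have hd3 := hN m hm
  calc dist (∫ y, f y ∂(ν m)) (∫ y, f y ∂μ)
      ≤ dist (∫ y, f y ∂(ν m))
          (∑ w : Fin l → Bool, (((ν m) (Cyl l w)).toReal : ℂ) * f (extw l w))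
        + dist (∑ w : Fin l → Bool, (((ν m) (Cyl l w)).toReal : ℂ) * f (extw l w))
            (∑ w : Fin l → Bool, ((μ (Cyl l w)).toReal : ℂ) * f (extw l w))
        + dist (∑ w : Fin l → Bool, ((μ (Cyl l w)).toReal : ℂ) * f (extw l w))
            (∫ y, f y ∂μ) := dist_triangle4 _ _ _ _
    _ < ε := by
        rw [dist_comm (∑ w : Fin l → Bool, ((μ (Cyl l w)).toReal : ℂ) * f (extw l w))] at *
        linarith

/-- indicator of a cylinder as a bounded continuous ℂ-valued function. -/
noncomputable def cylBCF (l : ℕ) (w : Fin l → Bool) : BoundedContinuousFunction Cantor ℂ :=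
  BoundedContinuousFunction.ofNormedAddCommGroup
    (Set.indicator (Cyl l w) (fun _ => (1:ℂ)))
    (continuous_indicator (by simp [(isClopen_cyl l w).frontier_eq]) continuous_const.continuousOn)
    1
    (by
      intro y
      by_cases hy : y ∈ Cyl l w <;> simp [hy])

lemma integral_cylBCF (ρ : Measure Cantor) [IsFiniteMeasure ρ] (l : ℕ) (w : Fin l → Bool) :
    ∫ y, cylBCF l w y ∂ρ = ((ρ (Cyl l w)).toReal : ℂ) := by
  have : ∀ y, cylBCF l w y = Set.indicator (Cyl l w) (fun _ => (1:ℂ)) y := fun y => rfl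
  simp only [this]
  rw [integral_indicator_const _ (measurableSet_cyl l w), Complex.real_smul, mul_one]
  rfl

lemma cylinders_of_weakConv {ν : ℕ → Measure Cantor} {μ : Measure Cantor}
    (hν : ∀ m, IsProbabilityMeasure (ν m)) (hμ : IsProbabilityMeasure μ)
    (hW : WeakConv ν μ) (l : ℕ) (w : Fin l → Bool) :
    Tendsto (fun m => ((ν m) (Cyl l w)).toReal) atTop (𝓝 ((μ (Cyl l w)).toReal)) := by
  have h := hW (cylBCF l w)
  have h2 : Tendsto (fun m => (((ν m) (Cyl l w)).toReal : ℂ)) atTop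
      (𝓝 (((μ (Cyl l w)).toReal : ℂ))) := by
    have e1 : ∀ m, ∫ y, cylBCF l w y ∂(ν m) = (((ν m) (Cyl l w)).toReal : ℂ) := by
      intro m
      have := hν m
      exact integral_cylBCF (ν m) l w
    have e2 : ∫ y, cylBCF l w y ∂μ = ((μ (Cyl l w)).toReal : ℂ) := by
      have := hμ
      exact integral_cylBCF μ l w
    rw [← e2]
    exact h.congr e1
  have h3 := (Complex.continuous_re.tendsto _).comp h2
  simpa [Function.comp_def] using h3
section Construction

variable (p : ∀ l, (Fin l → Bool) → ℝ)

/-- cumulative left mass of a word. -/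
noncomputable def cum : ∀ l, (Fin l → Bool) → ℝ
  | 0, _ => 0
  | (l+1), w => cum l (Fin.init w) +
      (if w (Fin.last l) then p (l+1) (Fin.snoc (Fin.init w) false) else 0)

/-- word of length `l` assigned to `u`. -/
noncomputable def wrd (u : ℝ) : ∀ l, Fin l → Bool
  | 0 => fun j => j.elim0
  | (l+1) => Fin.snoc (wrd u l)
      (if u < cum p l (wrd u l) + p (l+1) (Fin.snoc (wrd u l) false) then false else true)

variable {p}

lemma cum_snoc_false (l : ℕ) (w : Fin l → Bool) :
    cum p (l+1) (Fin.snoc w false) = cum p l w := by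
  simp [cum, Fin.init_snoc, Fin.snoc_last]

lemma cum_snoc_true (l : ℕ) (w : Fin l → Bool) :
    cum p (l+1) (Fin.snoc w true) = cum p l w + p (l+1) (Fin.snoc w false) := by
  simp [cum, Fin.init_snoc, Fin.snoc_last]

variable (hp0 : ∀ w : Fin 0 → Bool, p 0 w = 1)
  (hpos : ∀ l w, 0 ≤ p l w)
  (hadd : ∀ l w, p l w = p (l+1) (Fin.snoc w false) + p (l+1) (Fin.snoc w true))

include hpos in
lemma cum_nonneg : ∀ l w, 0 ≤ cum p l w := by
  intro l
  induction l with
  | zero => intro w; simp [cum]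
  | succ l IH =>
    intro w
    rw [← Fin.snoc_init_self w]
    cases hb : w (Fin.last l)
    · rw [cum_snoc_false]; exact IH _
    · rw [cum_snoc_true]
      exact add_nonneg (IH _) (hpos _ _)

include hp0 hpos hadd in
lemma cum_add_le_one : ∀ l w, cum p l w + p l w ≤ 1 := by
  intro l
  induction l with
  | zero => intro w; simp [cum, hp0 w]
  | succ l IH =>
    intro w
    rw [← Fin.snoc_init_self w]
    cases hb : w (Fin.last l)
    · rw [cum_snoc_false]
      calc cum p l (Fin.init w) + p (l+1) (Fin.snoc (Fin.init w) false)
          ≤ cum p l (Fin.init w) + p l (Fin.init w) := by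
            rw [hadd l (Fin.init w)]
            have := hpos (l+1) (Fin.snoc (Fin.init w) true)
            linarith
        _ ≤ 1 := IH _
    · rw [cum_snoc_true]
      calc cum p l (Fin.init w) + p (l+1) (Fin.snoc (Fin.init w) false)
            + p (l+1) (Fin.snoc (Fin.init w) true)
          = cum p l (Fin.init w) + p l (Fin.init w) := by rw [hadd l (Fin.init w)]; ring
        _ ≤ 1 := IH _

include hp0 hpos hadd in
lemma wrd_invariant {u : ℝ} (hu : u ∈ Set.Ico (0:ℝ) 1) :
    ∀ l, cum p l (wrd p u l) ≤ u ∧ u < cum p l (wrd p u l) + p l (wrd p u l) := by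
  intro l
  induction l with
  | zero =>
    constructor
    · simpa [cum] using hu.1
    · simpa [cum, hp0] using hu.2
  | succ l IH =>
    have hw : wrd p u (l+1) = Fin.snoc (wrd p u l)
        (if u < cum p l (wrd p u l) + p (l+1) (Fin.snoc (wrd p u l) false)
          then false else true) := rfl
    by_cases hlt : u < cum p l (wrd p u l) + p (l+1) (Fin.snoc (wrd p u l) false)
    · rw [hw, if_pos hlt, cum_snoc_false]
      exact ⟨IH.1, hlt⟩
    · rw [hw, if_neg hlt, cum_snoc_true]
      constructor
      · exact not_lt.mp hlt
      · have h2 := IH.2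
        rw [hadd l (wrd p u l)] at h2
        linarith
include hpos hadd in
lemma wrd_unique {u : ℝ} :
    ∀ (l : ℕ) (w : Fin l → Bool), cum p l w ≤ u → u < cum p l w + p l w → wrd p u l = w := by
  intro l
  induction l with
  | zero =>
    intro w _ _
    funext j
    exact j.elim0
  | succ l IH =>
    intro w h1 h2
    have hw : w = Fin.snoc (Fin.init w) (w (Fin.last l)) := (Fin.snoc_init_self w).symm
    have hweq : wrd p u (l+1) = Fin.snoc (wrd p u l)
        (if u < cum p l (wrd p u l) + p (l+1) (Fin.snoc (wrd p u l) false)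
          then false else true) := rfl
    cases hb : w (Fin.last l)
    · rw [hb] at hw
      rw [hw, cum_snoc_false] at h1 h2
      have h2' : u < cum p l (Fin.init w) + p l (Fin.init w) := by
        rw [hadd l (Fin.init w)]
        have := hpos (l+1) (Fin.snoc (Fin.init w) true)
        linarith
      have hIH : wrd p u l = Fin.init w := IH _ h1 h2'
      rw [hweq, hIH, if_pos h2]
      exact hw.symm
    · rw [hb] at hw
      rw [hw, cum_snoc_true] at h1 h2
      have h1' : cum p l (Fin.init w) ≤ u := by
        have := hpos (l+1) (Fin.snoc (Fin.init w) false)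
        linarith
      have h2' : u < cum p l (Fin.init w) + p l (Fin.init w) := by
        rw [hadd l (Fin.init w)]
        linarith
      have hIH : wrd p u l = Fin.init w := IH _ h1' h2'
      have hnlt : ¬ u < cum p l (Fin.init w) + p (l+1) (Fin.snoc (Fin.init w) false) :=
        not_lt.mpr h1
      rw [hweq, hIH, if_neg hnlt]
      exact hw.symm

include hp0 hpos hadd in
lemma preimage_wrd (l : ℕ) (w : Fin l → Bool) :
    {u : ℝ | u ∈ Set.Ico (0:ℝ) 1 ∧ wrd p u l = w}
      = Set.Ico (cum p l w) (cum p l w + p l w) := by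
  ext u
  simp only [Set.mem_setOf_eq, Set.mem_Ico]
  constructor
  · rintro ⟨hu, rfl⟩
    exact wrd_invariant hp0 hpos hadd hu l
  · rintro ⟨h1, h2⟩
    have hu : u ∈ Set.Ico (0:ℝ) 1 := by
      constructor
      · exact le_trans (cum_nonneg hpos l w) h1
      · exact lt_of_lt_of_le h2 (cum_add_le_one hp0 hpos hadd l w)
    exact ⟨hu, wrd_unique hpos hadd l w h1 h2⟩

lemma wrd_castLE (u : ℝ) :
    ∀ (l' l : ℕ) (h : l ≤ l') (j : Fin l), wrd p u l' (Fin.castLE h j) = wrd p u l j := by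
  intro l'
  induction l' with
  | zero =>
    intro l h j
    exact absurd (lt_of_lt_of_le j.isLt h) (Nat.not_lt_zero _)
  | succ l' IH =>
    intro l h j
    rcases eq_or_lt_of_le h with rfl | hlt
    · have : Fin.castLE h j = j := Fin.ext rfl
      rw [this]
    · have h' : l ≤ l' := by omega
      have hcast : Fin.castLE h j = Fin.castSucc (Fin.castLE h' j) := Fin.ext rfl
      have hweq : wrd p u (l'+1) = Fin.snoc (wrd p u l')
          (if u < cum p l' (wrd p u l') + p (l'+1) (Fin.snoc (wrd p u l') false)
            then false else true) := rfl
      rw [hcast, hweq, Fin.snoc_castSucc, IH l h' j]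

variable (p) in
/-- the limit point map `[0,1) → Cantor`. -/
noncomputable def gmap (u : ℝ) : Cantor := fun i => wrd p u (i+1) (Fin.last i)

lemma gmap_coord (u : ℝ) (l : ℕ) (j : Fin l) : gmap p u (j : ℕ) = wrd p u l j := by
  have h1 : (j : ℕ) + 1 ≤ l := j.isLt
  have h2 : Fin.castLE h1 (Fin.last (j : ℕ)) = j := Fin.ext rfl
  have := wrd_castLE (p := p) u l ((j : ℕ)+1) h1 (Fin.last (j : ℕ))
  rw [h2] at this
  exact this.symm

lemma gmap_mem_cyl (u : ℝ) (l : ℕ) (w : Fin l → Bool) :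
    gmap p u ∈ Cyl l w ↔ wrd p u l = w := by
  constructor
  · intro h
    funext j
    rw [← gmap_coord u l j]
    exact h j
  · intro h j
    rw [gmap_coord u l j, h]

lemma measurableSet_wrd : ∀ (l : ℕ) (w : Fin l → Bool), MeasurableSet {u : ℝ | wrd p u l = w} := by
  intro l
  induction l with
  | zero =>
    intro w
    have : {u : ℝ | wrd p u 0 = w} = Set.univ := by
      ext u
      simp only [Set.mem_setOf_eq, Set.mem_univ, iff_true]
      funext j
      exact j.elim0
    rw [this]
    exact MeasurableSet.univ
  | succ l IH =>
    intro w
    have hiff : ∀ u : ℝ, wrd p u (l+1) = w ↔ (wrd p u l = Fin.init w ∧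
        (if u < cum p l (Fin.init w) + p (l+1) (Fin.snoc (Fin.init w) false)
          then false else true) = w (Fin.last l)) := by
      intro u
      have hweq : wrd p u (l+1) = Fin.snoc (wrd p u l)
          (if u < cum p l (wrd p u l) + p (l+1) (Fin.snoc (wrd p u l) false)
            then false else true) := rfl
      constructor
      · intro h
        have hinit : wrd p u l = Fin.init w := by
          rw [← h, hweq, Fin.init_snoc]
        refine ⟨hinit, ?_⟩
        rw [← hinit]
        rw [← h, hweq, Fin.snoc_last]
      · rintro ⟨h1, h2⟩
        rw [hweq, h1, h2]
        exact Fin.snoc_init_self w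
    have hkey : {u : ℝ | wrd p u (l+1) = w}
        = {u : ℝ | wrd p u l = Fin.init w} ∩
          {u : ℝ | (if u < cum p l (Fin.init w) + p (l+1) (Fin.snoc (Fin.init w) false)
            then false else true) = w (Fin.last l)} := by
      ext u
      simpa using hiff u
    rw [hkey]
    apply (IH _).inter
    cases hb : w (Fin.last l)
    · have he : {u : ℝ | (if u < cum p l (Fin.init w) + p (l+1) (Fin.snoc (Fin.init w) false)
          then false else true) = false}
          = Set.Iio (cum p l (Fin.init w) + p (l+1) (Fin.snoc (Fin.init w) false)) := by
        ext u
        by_cases hu : u < cum p l (Fin.init w) + p (l+1) (Fin.snoc (Fin.init w) false) <;>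
          simp [hu]
      rw [he]
      exact measurableSet_Iio
    · have he : {u : ℝ | (if u < cum p l (Fin.init w) + p (l+1) (Fin.snoc (Fin.init w) false)
          then false else true) = true}
          = Set.Ici (cum p l (Fin.init w) + p (l+1) (Fin.snoc (Fin.init w) false)) := by
        ext u
        by_cases hu : u < cum p l (Fin.init w) + p (l+1) (Fin.snoc (Fin.init w) false) <;>
          simp [hu, Set.mem_Ici, not_lt]
      rw [he]
      exact measurableSet_Ici

lemma measurable_gmap : Measurable (gmap p) := by
  apply measurable_pi_lambda
  intro i
  apply measurable_to_countable'
  intro b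
  have : (fun u => gmap p u i) ⁻¹' {b}
      = ⋃ (w : Fin (i+1) → Bool) (_ : w (Fin.last i) = b), {u : ℝ | wrd p u (i+1) = w} := by
    ext u
    simp only [Set.mem_preimage, Set.mem_singleton_iff, Set.mem_iUnion, Set.mem_setOf_eq]
    constructor
    · intro h
      exact ⟨wrd p u (i+1), h, rfl⟩
    · rintro ⟨w, hw, rfl⟩
      exact hw
  rw [this]
  exact MeasurableSet.iUnion fun w => MeasurableSet.iUnion fun _ => measurableSet_wrd _ _

variable (p) in
/-- the limit measure. -/
noncomputable def limMeas : Measure Cantor :=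
  (MeasureTheory.volume.restrict (Set.Ico (0:ℝ) 1)).map (gmap p)

lemma limMeas_prob : IsProbabilityMeasure (limMeas p) := by
  constructor
  rw [limMeas, Measure.map_apply measurable_gmap MeasurableSet.univ]
  simp [Measure.restrict_apply]

include hp0 hpos hadd in
lemma limMeas_cyl (l : ℕ) (w : Fin l → Bool) :
    limMeas p (Cyl l w) = ENNReal.ofReal (p l w) := by
  rw [limMeas, Measure.map_apply measurable_gmap (measurableSet_cyl l w)]
  rw [Measure.restrict_apply (measurable_gmap (measurableSet_cyl l w))]
  have : gmap p ⁻¹' (Cyl l w) ∩ Set.Ico (0:ℝ) 1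
      = Set.Ico (cum p l w) (cum p l w + p l w) := by
    rw [← preimage_wrd hp0 hpos hadd l w]
    ext u
    simp only [Set.mem_inter_iff, Set.mem_preimage, Set.mem_setOf_eq]
    rw [gmap_mem_cyl]
    tauto
  rw [this, Real.volume_Ico]
  congr 1
  ring

include hp0 hpos hadd in
lemma limMeas_cyl_toReal (l : ℕ) (w : Fin l → Bool) :
    (limMeas p (Cyl l w)).toReal = p l w := by
  rw [limMeas_cyl hp0 hpos hadd l w, ENNReal.toReal_ofReal (hpos l w)]
end Construction

lemma measH_nonneg (μ : Measure Cantor) (hprob : IsProbabilityMeasure μ) (l : ℕ) :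
    0 ≤ measH μ l := by
  apply Finset.sum_nonneg
  intro w _
  apply negMulLog2_nonneg ENNReal.toReal_nonneg
  have h1 : μ (Cyl l w) ≤ 1 := prob_le_one
  calc (μ (Cyl l w)).toReal ≤ (1 : ℝ≥0∞).toReal := ENNReal.toReal_mono ENNReal.one_ne_top h1
    _ = 1 := by simp

lemma exists_diag (x : Cantor) (φ : ℕ → ℕ) :
    ∃ ψ : ℕ → ℕ, StrictMono ψ ∧ ∃ p : ∀ l, (Fin l → Bool) → ℝ,
      (∀ l w, p l w ∈ Set.Icc (0:ℝ) 1) ∧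
      (∀ (l : ℕ) (w : Fin l → Bool),
        Tendsto (fun m => eP x (φ (ψ m)) l w) atTop (𝓝 (p l w))) := by
  have hs : IsCompact (Set.univ.pi (fun _ : (Σ l : ℕ, (Fin l → Bool)) => Set.Icc (0:ℝ) 1)) :=
    isCompact_univ_pi fun _ => isCompact_Icc
  have hmem : ∀ m, (fun lw : Σ l : ℕ, (Fin l → Bool) => eP x (φ m) lw.1 lw.2)
      ∈ Set.univ.pi (fun _ => Set.Icc (0:ℝ) 1) := by
    intro m lw _
    exact ⟨eP_nonneg _ _ _ _, eP_le_one _ _ _ _⟩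
  obtain ⟨a, ha, ψ, hψ, hlim⟩ := hs.tendsto_subseq hmem
  refine ⟨ψ, hψ, fun l w => a ⟨l, w⟩, fun l w => ha ⟨l, w⟩ (Set.mem_univ _), fun l w => ?_⟩
  exact (tendsto_pi_nhds.mp hlim) ⟨l, w⟩

lemma exists_Wx_liminf (x : Cantor) (l : ℕ) :
    ∃ μ ∈ Wx x, measH μ (l+1) / ((l:ℝ)+1)
      = Filter.liminf (fun n => slidingH x n (l+1)) atTop := by
  obtain ⟨φ, hφm, hφpos, hφlim⟩ := exists_subseq_tendsto_liminf
    (slidingH_boundedUnder_ge x (l+1)) (slidingH_boundedUnder_le x (l+1))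
  obtain ⟨ψ, hψm, p, hpIcc, hconv⟩ := exists_diag x φ
  have hcomp : StrictMono (fun m => φ (ψ m)) := hφm.comp hψm
  have hpos' : ∀ m, 0 < φ (ψ m) := fun m => hφpos (ψ m)
  have hp0 : ∀ w : Fin 0 → Bool, p 0 w = 1 := by
    intro w
    have h1 := hconv 0 w
    have h2 : (fun m => eP x (φ (ψ m)) 0 w) = fun _ => (1:ℝ) := by
      funext m; exact eP_zero x (hpos' m).ne' w
    rw [h2] at h1
    exact tendsto_nhds_unique h1 tendsto_const_nhds
  have hpos : ∀ l' w, 0 ≤ p l' w := fun l' w => (hpIcc l' w).1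
  have hadd : ∀ (l' : ℕ) (w : Fin l' → Bool),
      p l' w = p (l'+1) (Fin.snoc w false) + p (l'+1) (Fin.snoc w true) := by
    intro l' w
    have h1 := hconv l' w
    have h2 := (hconv (l'+1) (Fin.snoc w false)).add (hconv (l'+1) (Fin.snoc w true))
    have h3 : (fun m => eP x (φ (ψ m)) l' w)
        = fun m => eP x (φ (ψ m)) (l'+1) (Fin.snoc w false)
          + eP x (φ (ψ m)) (l'+1) (Fin.snoc w true) := by
      funext m; exact eP_add x (φ (ψ m)) l' w
    rw [h3] at h1
    exact tendsto_nhds_unique h1 h2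
  have hμprob : IsProbabilityMeasure (limMeas p) := limMeas_prob
  have hcylconv : ∀ (l' : ℕ) (w : Fin l' → Bool),
      Tendsto (fun m => ((empMeas x (φ (ψ m))) (Cyl l' w)).toReal) atTop
        (𝓝 ((limMeas p (Cyl l' w)).toReal)) := by
    intro l' w
    rw [limMeas_cyl_toReal hp0 hpos hadd l' w]
    have := hconv l' w
    simpa only [empMeas_cyl_toReal] using this
  have hW : WeakConv (fun m => empMeas x (φ (ψ m))) (limMeas p) :=
    weakConv_of_cylinders (fun m => empMeas_prob x (hpos' m).ne') hμprob hcylconv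
  refine ⟨limMeas p, ⟨hμprob, fun m => φ (ψ m), hcomp, hpos', hW⟩, ?_⟩
  have hsl : ∀ w : Fin (l+1) → Bool, Tendsto (fun m => slidingP x (φ (ψ m)) (l+1) w) atTop
      (𝓝 ((limMeas p (Cyl (l+1) w)).toReal)) := by
    intro w
    apply tendsto_slidingP_of_eP hcomp
    rw [limMeas_cyl_toReal hp0 hpos hadd]
    exact hconv (l+1) w
  have hH := tendsto_slidingH hsl
  have hH2 : Tendsto (fun m => slidingH x (φ (ψ m)) (l+1)) atTop
      (𝓝 (Filter.liminf (fun n => slidingH x n (l+1)) atTop)) := hφlim.comp hψm.tendsto_atTop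
  have hfin := tendsto_nhds_unique hH hH2
  have hc : ((l + 1 : ℕ) : ℝ) = (l : ℝ) + 1 := by push_cast; ring
  rw [← hc]
  exact hfin

lemma bddBelow_S (x : Cantor) :
    BddBelow {v : ℝ | ∃ μ ∈ Wx x, ∃ l : ℕ, v = measH μ (l + 1) / (l + 1)} := by
  refine ⟨0, ?_⟩
  rintro v ⟨μ, hμ, l, rfl⟩
  have h0 : 0 ≤ measH μ (l+1) := measH_nonneg μ hμ.1 (l+1)
  positivity

lemma bddBelow_range_liminf (x : Cantor) :
    BddBelow (Set.range fun l : ℕ => Filter.liminf (fun n => slidingH x n (l + 1)) atTop) := by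
  refine ⟨0, ?_⟩
  rintro v ⟨l', rfl⟩
  exact liminf_slidingH_nonneg x (l'+1)
end Dim12

open Dim12

/-- the liminf in the lower average entropy can be replaced by an infimum. -/
theorem dimFS_eq_inf_inf_measH (x : Cantor) :
    dimFS x = sInf {v : ℝ | ∃ μ ∈ Wx x, ∃ l : ℕ, v = measH μ (l + 1) / (l + 1)} := by
  apply le_antisymm
  · apply le_csInf
    · obtain ⟨μ, hμ, _⟩ := exists_Wx_liminf x 0
      exact ⟨measH μ (0+1) / (((0:ℕ):ℝ)+1), μ, hμ, 0, rfl⟩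
    · rintro v ⟨μ, hμ, l, rfl⟩
      obtain ⟨hprob, φ, hφm, hφpos, hW⟩ := hμ
      have hcyl := cylinders_of_weakConv (fun m => empMeas_prob x (hφpos m).ne') hprob hW
      have hsl : ∀ w : Fin (l+1) → Bool, Tendsto (fun m => slidingP x (φ m) (l+1) w) atTop
          (𝓝 ((μ (Cyl (l+1) w)).toReal)) := by
        intro w
        apply tendsto_slidingP_of_eP hφm
        have := hcyl (l+1) w
        simpa only [empMeas_cyl_toReal] using this
      have hH := tendsto_slidingH hsl
      have h1 : dimFS x ≤ Filter.liminf (fun n => slidingH x n (l+1)) atTop :=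
        ciInf_le (bddBelow_range_liminf x) l
      have h2 : Filter.liminf (fun n => slidingH x n (l+1)) atTop
          ≤ measH μ (l+1) / ((l+1 : ℕ) : ℝ) :=
        liminf_le_of_subseq hφm (slidingH_boundedUnder_ge x (l+1)) hH
      have h3 := h1.trans h2
      have hc : ((l + 1 : ℕ) : ℝ) = (l : ℝ) + 1 := by push_cast; ring
      rw [hc] at h3
      exact h3
  · apply le_ciInf
    intro l
    obtain ⟨μ, hμ, heq⟩ := exists_Wx_liminf x l
    have hmem : measH μ (l+1) / ((l:ℝ)+1)
        ∈ {v : ℝ | ∃ μ ∈ Wx x, ∃ l : ℕ, v = measH μ (l + 1) / (l + 1)} :=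
      ⟨μ, hμ, l, rfl⟩
    calc sInf {v : ℝ | ∃ μ ∈ Wx x, ∃ l : ℕ, v = measH μ (l + 1) / (l + 1)}
        ≤ measH μ (l+1) / ((l:ℝ)+1) := csInf_le (bddBelow_S x) hmem
      _ = _ := heq

end
end
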